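/- arXiv:math/0404325 — 7 statements merged into one kernel-verified Lean document; each statement's English description precedes it below -/
import Mathlib

section
/- Let G be a finite simple graph in which every vertex has degree at most Δ, where Δ is a positive integer, and suppose that G contains no triangles (no three pairwise adjacent vertices). Then α(G) ≥ (n(G) / (8Δ)) · log₂ Δ. -/
open Finset

/-- Independence number of a graph on a finite vertex type. -/
noncomputable def indepNum {W : Type*} [Fintype W] (G : SimpleGraph W) : ℕ :=
  sSup {k | ∃ s : Finset W, (∀ u ∈ s, ∀ v ∈ s, ¬ G.Adj u v) ∧ s.card = k}

private lemma logb2_le_self {y : ℝ} (hy : 1 ≤ y) : Real.logb 2 y ≤ y := by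
  rw [Real.logb_le_iff_le_rpow one_lt_two (by linarith)]
  have h := one_add_mul_self_le_rpow_one_add (by norm_num : (-1:ℝ) ≤ 1) hy
  norm_num at h
  linarith

private lemma analytic (Δ x : ℕ) (hΔ : 1 ≤ Δ) :
    Real.logb 2 (Δ:ℝ) * ((2:ℝ)^x + 1) ≤ 4*(Δ:ℝ) + 2*(x:ℝ)*(2:ℝ)^x := by
  have hΔ1 : (1:ℝ) ≤ (Δ:ℝ) := by exact_mod_cast hΔ
  have hlognn : 0 ≤ Real.logb 2 (Δ:ℝ) := Real.logb_nonneg one_lt_two hΔ1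
  have hs1 : (1:ℝ) ≤ Real.sqrt Δ := Real.one_le_sqrt.2 hΔ1
  have hhalf : Real.logb 2 (Δ:ℝ) = 2 * Real.logb 2 (Real.sqrt Δ) := by
    unfold Real.logb
    rw [Real.log_sqrt (by linarith)]
    ring
  have hpow : (0:ℝ) ≤ (2:ℝ)^x := by positivity
  rcases le_or_gt (Real.logb 2 (Δ:ℝ)) (2*(x:ℝ)) with h | h
  · have h1 : Real.logb 2 (Δ:ℝ) * (2:ℝ)^x ≤ 2*(x:ℝ)*(2:ℝ)^x :=
      mul_le_mul_of_nonneg_right h hpow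
    have h2 : Real.logb 2 (Δ:ℝ) ≤ 4*(Δ:ℝ) := le_trans (logb2_le_self hΔ1) (by linarith)
    nlinarith
  · have hx : (x:ℝ) ≤ Real.logb 2 (Real.sqrt Δ) := by
      rw [hhalf] at h; linarith
    have h2x : (2:ℝ)^x ≤ Real.sqrt Δ := by
      have : (2:ℝ)^(x:ℝ) ≤ (2:ℝ)^(Real.logb 2 (Real.sqrt Δ)) :=
        Real.rpow_le_rpow_of_exponent_le (by norm_num) hx
      rwa [Real.rpow_natCast, Real.rpow_logb (by norm_num) (by norm_num) (by linarith)] at this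
    have hls : Real.logb 2 (Real.sqrt Δ) ≤ Real.sqrt Δ := logb2_le_self hs1
    have hsq : Real.sqrt Δ * Real.sqrt Δ = (Δ:ℝ) := Real.mul_self_sqrt (by linarith)
    have : Real.logb 2 (Δ:ℝ) * ((2:ℝ)^x + 1) ≤ (2*Real.sqrt Δ) * (Real.sqrt Δ + 1) := by
      apply mul_le_mul (by rw [hhalf]; linarith) (by linarith) (by positivity) (by linarith)
    nlinarith

section AKSAux

open Real

variable {V : Type*} [Fintype V] [DecidableEq V] (G : SimpleGraph V) [DecidableRel G.Adj]

private def nbr (v : V) : Finset V := univ.filter (fun u => G.Adj v u)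

private def indSets : Finset (Finset V) :=
  univ.filter (fun s => ∀ u ∈ s, ∀ w ∈ s, ¬ G.Adj u w)

private def Ffun (Δ : ℕ) (v : V) (s : Finset V) : ℕ :=
  Δ * (if v ∈ s then 1 else 0) + (s ∩ nbr G v).card

private lemma mem_nbr {v u : V} : u ∈ nbr G v ↔ G.Adj v u := by
  simp [nbr]

private lemma mem_indSets {s : Finset V} :
    s ∈ indSets G ↔ ∀ u ∈ s, ∀ w ∈ s, ¬ G.Adj u w := by
  simp [indSets]

private lemma empty_mem_indSets : (∅ : Finset V) ∈ indSets G := by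
  simp [indSets]

/-- The free part of the neighborhood of `v` relative to `S`. -/
private def freeNbr (v : V) (S : Finset V) : Finset V :=
  (nbr G v).filter (fun u => ∀ w ∈ S, ¬ G.Adj u w)

private lemma fiber_eq (htri : G.CliqueFree 3) (v : V) (S : Finset V)
    (hSind : ∀ u ∈ S, ∀ w ∈ S, ¬ G.Adj u w)
    (hSdisj : ∀ u ∈ S, u ∉ insert v (nbr G v)) :
    (indSets G).filter (fun s => s \ insert v (nbr G v) = S) =
      insert (insert v S) ((freeNbr G v S).powerset.image (fun T => S ∪ T)) := by
  ext s
  simp only [mem_filter, mem_insert, mem_image, mem_powerset]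
  constructor
  · rintro ⟨hsI, hpr⟩
    have hsind := (mem_indSets G).1 hsI
    have hSsub : S ⊆ s := by
      intro u hu; rw [← hpr] at hu; exact (mem_sdiff.1 hu).1
    by_cases hv : v ∈ s
    · left
      ext u
      constructor
      · intro hu
        rcases eq_or_ne u v with rfl | hne
        · exact mem_insert_self _ _
        · refine mem_insert_of_mem ?_
          rw [← hpr, mem_sdiff]
          refine ⟨hu, fun hmem => ?_⟩
          rcases mem_insert.1 hmem with rfl | hnb
          · exact hne rfl
          · exact hsind v hv u hu (mem_nbr G |>.1 hnb)
      · intro hu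
        rcases mem_insert.1 hu with rfl | hu
        · exact hv
        · exact hSsub hu
    · right
      refine ⟨s ∩ nbr G v, ?_, ?_⟩
      · intro u hu
        have hus : u ∈ s := (mem_inter.1 hu).1
        have hun : u ∈ nbr G v := (mem_inter.1 hu).2
        exact mem_filter.2 ⟨hun, fun w hw => hsind u hus w (hSsub hw)⟩
      · ext u
        simp only [mem_union, mem_inter]
        constructor
        · rintro (hu | ⟨hu, _⟩)
          · exact hSsub hu
          · exact hu
        · intro hu
          by_cases hnb : u ∈ nbr G v
          · exact Or.inr ⟨hu, hnb⟩
          · refine Or.inl ?_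
            rw [← hpr, mem_sdiff]
            refine ⟨hu, fun hmem => ?_⟩
            rcases mem_insert.1 hmem with rfl | h
            · exact hv hu
            · exact hnb h
  · have hvnb : v ∉ nbr G v := by
      simp [mem_nbr, G.irrefl]
    rintro (rfl | ⟨T, hT, rfl⟩)
    · constructor
      · rw [mem_indSets]
        intro u hu w hw h
        rcases mem_insert.1 hu with rfl | hu'
        · rcases mem_insert.1 hw with rfl | hw'
          · exact G.irrefl h
          · exact hSdisj w hw' (mem_insert_of_mem ((mem_nbr G).2 h))
        · rcases mem_insert.1 hw with rfl | hw'
          · exact hSdisj u hu' (mem_insert_of_mem ((mem_nbr G).2 (h.symm)))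
          · exact hSind u hu' w hw' h
      · ext u
        simp only [mem_sdiff, mem_insert]
        constructor
        · rintro ⟨rfl | hu, hnot⟩
          · exact absurd (Or.inl rfl) hnot
          · exact hu
        · intro hu
          have := hSdisj u hu
          simp only [mem_insert] at this
          exact ⟨Or.inr hu, fun h => this h⟩
    · have hTnb : ∀ u ∈ T, u ∈ nbr G v := fun u hu => (mem_filter.1 (hT hu)).1
      have hTfree : ∀ u ∈ T, ∀ w ∈ S, ¬ G.Adj u w := fun u hu => (mem_filter.1 (hT hu)).2
      constructor
      · rw [mem_indSets]
        intro u hu w hw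
        rcases mem_union.1 hu with hu | hu <;> rcases mem_union.1 hw with hw | hw
        · exact hSind u hu w hw
        · intro h
          exact hTfree w hw u hu (h.symm)
        · exact hTfree u hu w hw
        · intro h
          exact htri {v, u, w} (SimpleGraph.is3Clique_triple_iff.2
            ⟨(mem_nbr G).1 (hTnb u hu), (mem_nbr G).1 (hTnb w hw), h⟩)
      · ext u
        simp only [mem_sdiff, mem_union, mem_insert]
        constructor
        · rintro ⟨hu | hu, hnot⟩
          · exact hu
          · exact absurd (Or.inr (hTnb u hu)) hnot
        · intro hu
          have := hSdisj u hu
          simp only [mem_insert] at this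
          exact ⟨Or.inl hu, fun h => this h⟩


private lemma inter_nbr_eq (v : V) (S : Finset V)
    (hSdisj : ∀ u ∈ S, u ∉ insert v (nbr G v)) {T : Finset V} (hT : T ⊆ freeNbr G v S) :
    (S ∪ T) ∩ nbr G v = T := by
  ext u
  simp only [mem_inter, mem_union]
  constructor
  · rintro ⟨hu | hu, hnb⟩
    · exact absurd (mem_insert_of_mem hnb) (hSdisj u hu)
    · exact hu
  · intro hu
    exact ⟨Or.inr hu, (mem_filter.1 (hT hu)).1⟩

private lemma vertex_bound (htri : G.CliqueFree 3) {Δ : ℕ} (hΔ : 1 ≤ Δ) (v : V) :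
    Real.logb 2 Δ * ((indSets G).card : ℝ) ≤ 4 * ∑ s ∈ indSets G, (Ffun G Δ v s : ℝ) := by
  have hvnb : v ∉ nbr G v := by simp [mem_nbr, G.irrefl]
  set pr : Finset V → Finset V := fun s => s \ insert v (nbr G v) with hprdef
  have hmaps : ∀ s ∈ indSets G, pr s ∈ (indSets G).image pr :=
    fun s hs => mem_image_of_mem _ hs
  have hcard : ∑ S ∈ (indSets G).image pr,
      (((indSets G).filter (fun s => pr s = S)).card : ℝ) = ((indSets G).card : ℝ) := by
    have h := Finset.sum_fiberwise_of_maps_to hmaps (fun _ => (1:ℝ))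
    simpa [Finset.sum_const] using h
  have hsum : ∑ S ∈ (indSets G).image pr,
      ∑ s ∈ (indSets G).filter (fun s => pr s = S), (Ffun G Δ v s : ℝ)
      = ∑ s ∈ indSets G, (Ffun G Δ v s : ℝ) :=
    Finset.sum_fiberwise_of_maps_to hmaps _
  rw [← hcard, ← hsum, Finset.mul_sum]
  rw [Finset.mul_sum]
  apply Finset.sum_le_sum
  intro S hS
  -- properties of S
  obtain ⟨s₀, hs₀, hprs₀⟩ := mem_image.1 hS
  have hs₀ind := (mem_indSets G).1 hs₀
  have hSind : ∀ u ∈ S, ∀ w ∈ S, ¬ G.Adj u w := by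
    intro u hu w hw
    rw [← hprs₀] at hu hw
    exact hs₀ind u (mem_sdiff.1 hu).1 w (mem_sdiff.1 hw).1
  have hSdisj : ∀ u ∈ S, u ∉ insert v (nbr G v) := by
    intro u hu
    rw [← hprs₀] at hu
    exact (mem_sdiff.1 hu).2
  have hfiber := fiber_eq G htri v S hSind hSdisj
  have hfib : (indSets G).filter (fun s => pr s = S) =
      insert (insert v S) ((freeNbr G v S).powerset.image (fun T => S ∪ T)) := hfiber
  rw [hfib]
  set X := freeNbr G v S with hXdef
  have hXnb : X ⊆ nbr G v := filter_subset _ _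
  have hnotmem : insert v S ∉ X.powerset.image (fun T => S ∪ T) := by
    intro hmem
    obtain ⟨T, hT, hTe⟩ := mem_image.1 hmem
    have hv : v ∈ S ∪ T := hTe.symm ▸ mem_insert_self v S
    rcases mem_union.1 hv with h | h
    · exact hSdisj v h (mem_insert_self _ _)
    · exact hvnb (hXnb ((mem_powerset.1 hT) h))
  have hinj : ∀ T₁ ∈ X.powerset, ∀ T₂ ∈ X.powerset,
      S ∪ T₁ = S ∪ T₂ → T₁ = T₂ := by
    intro T₁ h₁ T₂ h₂ he
    have e1 := inter_nbr_eq G v S hSdisj (mem_powerset.1 h₁)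
    have e2 := inter_nbr_eq G v S hSdisj (mem_powerset.1 h₂)
    rw [← e1, ← e2, he]
  -- cardinality of the fiber
  have hfibcard : (insert (insert v S) (X.powerset.image (fun T => S ∪ T))).card
      = 2 ^ X.card + 1 := by
    rw [card_insert_of_notMem hnotmem, Finset.card_image_of_injOn hinj, card_powerset]
  -- sum of Ffun over the fiber
  have hFv : Ffun G Δ v (insert v S) = Δ := by
    have h0 : (insert v S) ∩ nbr G v = ∅ := by
      ext u
      simp only [mem_inter, mem_insert, notMem_empty, iff_false, not_and]
      rintro (rfl | hu)
      · exact hvnb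
      · intro hnb
        exact hSdisj u hu (mem_insert_of_mem hnb)
    simp [Ffun, h0]
  have hFT : ∀ T ∈ X.powerset, Ffun G Δ v (S ∪ T) = T.card := by
    intro T hT
    have hvnot : v ∉ S ∪ T := by
      intro hv
      rcases mem_union.1 hv with h | h
      · exact hSdisj v h (mem_insert_self _ _)
      · exact hvnb (hXnb ((mem_powerset.1 hT) h))
    simp [Ffun, hvnot, inter_nbr_eq G v S hSdisj (mem_powerset.1 hT)]
  have hfibsum : ∑ s ∈ insert (insert v S) (X.powerset.image (fun T => S ∪ T)),
      (Ffun G Δ v s : ℝ) = (Δ : ℝ) + ∑ T ∈ X.powerset, (T.card : ℝ) := by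
    rw [Finset.sum_insert hnotmem, Finset.sum_image hinj, hFv]
    congr 1
    exact Finset.sum_congr rfl (fun T hT => by rw [hFT T hT])
  rw [hfibsum, hfibcard]
  -- the double counting identity 2 * ∑ |T| = x * 2^x
  have hdouble : 2 * ∑ T ∈ X.powerset, T.card = X.card * 2 ^ X.card := by
    have h1 : ∑ T ∈ X.powerset, T.card = ∑ T ∈ X.powerset, (X.card - T.card) := by
      apply Finset.sum_nbij' (fun T => X \ T) (fun T => X \ T)
      · intro T hT; exact mem_powerset.2 sdiff_subset
      · intro T hT; exact mem_powerset.2 sdiff_subset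
      · intro T hT; simp [sdiff_sdiff_right_self, inf_eq_inter,
          inter_eq_right.2 (mem_powerset.1 hT)]
      · intro T hT; simp [sdiff_sdiff_right_self, inf_eq_inter,
          inter_eq_right.2 (mem_powerset.1 hT)]
      · intro T hT
        have h := card_sdiff_of_subset (mem_powerset.1 hT)
        have h2 := card_le_card (mem_powerset.1 hT)
        omega
    have h2 : ∀ T ∈ X.powerset, T.card + (X.card - T.card) = X.card := by
      intro T hT; exact Nat.add_sub_cancel' (card_le_card (mem_powerset.1 hT))
    calc 2 * ∑ T ∈ X.powerset, T.card
        = ∑ T ∈ X.powerset, T.card + ∑ T ∈ X.powerset, (X.card - T.card) := by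
          rw [← h1]; ring
      _ = ∑ T ∈ X.powerset, (T.card + (X.card - T.card)) := Finset.sum_add_distrib.symm
      _ = ∑ T ∈ X.powerset, X.card := Finset.sum_congr rfl h2
      _ = X.card * 2 ^ X.card := by rw [Finset.sum_const, card_powerset, smul_eq_mul, mul_comm]
  have hdR : (2:ℝ) * ∑ T ∈ X.powerset, (T.card : ℝ) = (X.card : ℝ) * 2 ^ X.card := by
    have := congrArg (fun k : ℕ => (k : ℝ)) hdouble
    push_cast at this
    convert this using 2
  have hana := analytic Δ X.card hΔ
  push_cast
  nlinarith [hana, hdR]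


private lemma total_bound {Δ : ℕ} (hdeg : ∀ v : V, (nbr G v).card ≤ Δ) (s : Finset V) :
    ∑ v : V, Ffun G Δ v s ≤ 2 * Δ * s.card := by
  have h1 : ∑ v : V, Δ * (if v ∈ s then 1 else 0) = Δ * s.card := by
    rw [← Finset.mul_sum]
    congr 1
    rw [Finset.sum_ite_mem, univ_inter, Finset.sum_const, smul_eq_mul, mul_one]
  have h2 : ∑ v : V, (s ∩ nbr G v).card ≤ Δ * s.card := by
    have e1 : ∀ v : V, (s ∩ nbr G v).card = ∑ w ∈ s, if G.Adj v w then 1 else 0 := by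
      intro v
      rw [← Finset.card_filter]
      congr 1
      ext w
      simp only [mem_inter, mem_filter, mem_nbr]
    have e2 : ∀ w : V, (∑ v : V, if G.Adj v w then 1 else 0) = (nbr G w).card := by
      intro w
      rw [nbr, Finset.card_filter]
      exact Finset.sum_congr rfl (fun v _ => by simp [G.adj_comm])
    calc ∑ v : V, (s ∩ nbr G v).card
        = ∑ v : V, ∑ w ∈ s, if G.Adj v w then 1 else 0 :=
          Finset.sum_congr rfl (fun v _ => e1 v)
      _ = ∑ w ∈ s, ∑ v : V, if G.Adj v w then 1 else 0 := Finset.sum_comm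
      _ = ∑ w ∈ s, (nbr G w).card := Finset.sum_congr rfl (fun w _ => e2 w)
      _ ≤ ∑ _w ∈ s, Δ := Finset.sum_le_sum (fun w _ => hdeg w)
      _ = s.card * Δ := by rw [Finset.sum_const, smul_eq_mul]
      _ = Δ * s.card := mul_comm _ _
  calc ∑ v : V, Ffun G Δ v s
      = (∑ v : V, Δ * (if v ∈ s then 1 else 0)) + ∑ v : V, (s ∩ nbr G v).card :=
        Finset.sum_add_distrib
    _ ≤ Δ * s.card + Δ * s.card := add_le_add h1.le h2
    _ = 2 * Δ * s.card := by ring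

end AKSAux

theorem statement4 {W : Type*} [Fintype W] (G : SimpleGraph W) (Δ : ℕ) (hΔ : 0 < Δ)
    (hdeg : ∀ v : W, (G.neighborSet v).ncard ≤ Δ)
    (htri : G.CliqueFree 3) :
    (Fintype.card W : ℝ) / (8 * Δ) * Real.logb 2 Δ ≤ (indepNum G : ℝ) := by
  classical
  have hdeg' : ∀ v : W, (nbr G v).card ≤ Δ := by
    intro v
    have h : G.neighborSet v = ↑(nbr G v) := by
      ext u
      simp [nbr, SimpleGraph.mem_neighborSet]
    have := hdeg v
    rwa [h, Set.ncard_coe_finset] at this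
  have hne : (∅ : Finset W) ∈ indSets G := empty_mem_indSets G
  have hIpos : 0 < (indSets G).card := Finset.card_pos.2 ⟨∅, hne⟩
  have hbdd : BddAbove {k | ∃ s : Finset W, (∀ u ∈ s, ∀ v ∈ s, ¬ G.Adj u v) ∧ s.card = k} := by
    refine ⟨Fintype.card W, ?_⟩
    rintro k ⟨s, _, rfl⟩
    exact s.card_le_univ.trans_eq Finset.card_univ
  have halpha : ∀ s ∈ indSets G, s.card ≤ indepNum G := by
    intro s hs
    exact le_csSup hbdd ⟨s, (mem_indSets G).1 hs, rfl⟩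
  have hT : ∑ s ∈ indSets G, (s.card : ℝ) ≤ ((indSets G).card : ℝ) * (indepNum G : ℝ) := by
    have : ∑ s ∈ indSets G, s.card ≤ (indSets G).card * indepNum G := by
      calc ∑ s ∈ indSets G, s.card ≤ ∑ _s ∈ indSets G, indepNum G :=
            Finset.sum_le_sum halpha
        _ = (indSets G).card * indepNum G := by rw [Finset.sum_const, smul_eq_mul]
    exact_mod_cast this
  have hmain : (Fintype.card W : ℝ) * Real.logb 2 Δ * ((indSets G).card : ℝ) ≤
      8 * Δ * ∑ s ∈ indSets G, (s.card : ℝ) := by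
    calc (Fintype.card W : ℝ) * Real.logb 2 Δ * ((indSets G).card : ℝ)
        = ∑ _v : W, Real.logb 2 Δ * ((indSets G).card : ℝ) := by
          rw [Finset.sum_const, card_univ, nsmul_eq_mul]; ring
      _ ≤ ∑ v : W, 4 * ∑ s ∈ indSets G, (Ffun G Δ v s : ℝ) :=
          Finset.sum_le_sum (fun v _ => vertex_bound G htri hΔ v)
      _ = 4 * ∑ s ∈ indSets G, ∑ v : W, (Ffun G Δ v s : ℝ) := by
          rw [← Finset.mul_sum, Finset.sum_comm]
      _ ≤ 4 * ∑ s ∈ indSets G, ((2 * Δ * s.card : ℕ) : ℝ) := by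
          apply mul_le_mul_of_nonneg_left _ (by norm_num)
          apply Finset.sum_le_sum
          intro s hs
          have h := total_bound G hdeg' s
          calc ∑ v : W, (Ffun G Δ v s : ℝ) = ((∑ v : W, Ffun G Δ v s : ℕ) : ℝ) := by
                push_cast; rfl
            _ ≤ ((2 * Δ * s.card : ℕ) : ℝ) := by exact_mod_cast h
      _ = 8 * Δ * ∑ s ∈ indSets G, (s.card : ℝ) := by
          rw [Finset.mul_sum, Finset.mul_sum]
          apply Finset.sum_congr rfl
          intro s hs
          push_cast
          ring
  have hIposR : (0 : ℝ) < ((indSets G).card : ℝ) := by exact_mod_cast hIpos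
  have hΔR : (0 : ℝ) < (Δ : ℝ) := by exact_mod_cast hΔ
  rw [div_mul_eq_mul_div, div_le_iff₀ (by positivity)]
  have step : (Fintype.card W : ℝ) * Real.logb 2 Δ * ((indSets G).card : ℝ) ≤
      ((indepNum G : ℝ) * (8 * Δ)) * ((indSets G).card : ℝ) := by
    have h8 : (0:ℝ) ≤ 8 * Δ := by positivity
    nlinarith [mul_le_mul_of_nonneg_left hT h8]
  exact le_of_mul_le_mul_right step hIposR
end

section
/- Let n and d be positive integers with 2 ≤ d ≤ n and write d' = d−1. If v is a vertex of the Hamming sphere graph G_S of Hamming weight w (so 1 ≤ w ≤ d'), then the degree of v in G_S equals ∑_{i=1}^{d'} ∑_{j=⌈(w+i−d')/2⌉⁺}^{min{w,i}} C(w,j)·C(n−w,i−j) − 1. -/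
open Finset

/-- `⌈(w+i-d')/2⌉⁺`: the smallest nonnegative integer `m` with `m ≥ (w+i-d')/2`. -/
def ceilPos (w i d' : ℕ) : ℕ := (((w : ℤ) + i - d' + 1) / 2).toNat

/-- The Gilbert graph: vertices are `𝔽₂ⁿ`, two distinct vertices adjacent iff
their Hamming distance is at most `d - 1`. -/
def gilbertGraph (n d : ℕ) : SimpleGraph (Fin n → ZMod 2) where
  Adj u v := u ≠ v ∧ hammingDist u v ≤ d - 1
  symm := ⟨fun u v h => ⟨h.1.symm, by rw [hammingDist_comm]; exact h.2⟩⟩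
  loopless := ⟨fun u h => h.1 rfl⟩

/-- The Hamming sphere graph: the subgraph of the Gilbert graph induced by the
neighborhood of the all-zero vector, i.e. the nonzero vectors of weight at most `d - 1`,
with two distinct vertices adjacent iff their Hamming distance is at most `d - 1`. -/
def sphereGraph (n d : ℕ) : SimpleGraph ((gilbertGraph n d).neighborSet 0) :=
  (gilbertGraph n d).induce ((gilbertGraph n d).neighborSet 0)

namespace S7
variable {n : ℕ}

def ofSet (S : Finset (Fin n)) : Fin n → ZMod 2 := fun k => if k ∈ S then 1 else 0
def toSet (x : Fin n → ZMod 2) : Finset (Fin n) := {k | x k ≠ 0}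

lemma zmod2 (z : ZMod 2) : z = 0 ∨ z = 1 := by revert z; decide

lemma toSet_ofSet (S : Finset (Fin n)) : toSet (ofSet S) = S := by
  ext k; simp [toSet, ofSet]

lemma ofSet_toSet (x : Fin n → ZMod 2) : ofSet (toSet x) = x := by
  funext k; simp only [toSet, ofSet, Finset.mem_filter, Finset.mem_univ, true_and]
  rcases zmod2 (x k) with h | h <;> simp [h]

lemma norm_eq (x : Fin n → ZMod 2) : hammingNorm x = (toSet x).card := rfl

lemma dist_eq (x v0 : Fin n → ZMod 2) :
    hammingDist x v0 = (toSet x \ toSet v0).card + (toSet v0 \ toSet x).card := by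
  have h : ({i | x i ≠ v0 i} : Finset (Fin n)) = (toSet x \ toSet v0) ∪ (toSet v0 \ toSet x) := by
    ext k
    simp only [Finset.mem_union, Finset.mem_sdiff, toSet, Finset.mem_filter, Finset.mem_univ,
      true_and]
    rcases zmod2 (x k) with h | h <;> rcases zmod2 (v0 k) with h' | h' <;> simp [h, h']
  rw [hammingDist, h, Finset.card_union_of_disjoint disjoint_sdiff_sdiff]

lemma ceil_iff (w i d' a : ℕ) (haw : a ≤ w) (hai : a ≤ i) :
    (i - a) + (w - a) ≤ d' ↔ ceilPos w i d' ≤ a := by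
  unfold ceilPos; omega

lemma count_ij (P : Finset (Fin n)) (i j : ℕ) (hji : j ≤ i) :
    ({S : Finset (Fin n) | S.card = i ∧ (S ∩ P).card = j} : Finset _).card
      = P.card.choose j * (Pᶜ.card).choose (i - j) := by
  rw [← Finset.card_powersetCard, ← Finset.card_powersetCard, ← Finset.card_product]
  apply Finset.card_bij' (fun S _ => (S ∩ P, S \ P)) (fun q _ => q.1 ∪ q.2)
  · intro S hS
    simp only [Finset.mem_filter, Finset.mem_univ, true_and] at hS
    simp only [Finset.mem_product, Finset.mem_powersetCard]
    refine ⟨⟨Finset.inter_subset_right, hS.2⟩, ?_, ?_⟩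
    · intro k hk
      simp only [Finset.mem_sdiff] at hk
      simpa using hk.2
    · have := Finset.card_inter_add_card_sdiff S P
      omega
  · intro q hq
    simp only [Finset.mem_product, Finset.mem_powersetCard] at hq
    obtain ⟨⟨hA, hAc⟩, hB, hBc⟩ := hq
    have hdisj : Disjoint q.1 q.2 := by
      refine Finset.disjoint_left.mpr fun k hk1 hk2 => ?_
      have := hB hk2
      simp only [Finset.mem_compl] at this
      exact this (hA hk1)
    simp only [Finset.mem_filter, Finset.mem_univ, true_and]
    constructor
    · rw [Finset.card_union_of_disjoint hdisj, hAc, hBc]; omega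
    · have h1 : (q.1 ∪ q.2) ∩ P = q.1 := by
        ext k
        simp only [Finset.mem_inter, Finset.mem_union]
        constructor
        · rintro ⟨hk1 | hk1, hk2⟩
          · exact hk1
          · exact absurd hk2 (by simpa using hB hk1)
        · intro hk; exact ⟨Or.inl hk, hA hk⟩
      rw [h1, hAc]
  · intro S hS
    ext k
    simp only [Finset.mem_union, Finset.mem_inter, Finset.mem_sdiff]
    tauto
  · intro q hq
    simp only [Finset.mem_product, Finset.mem_powersetCard] at hq
    obtain ⟨⟨hA, hAc⟩, hB, hBc⟩ := hq
    have h1 : (q.1 ∪ q.2) ∩ P = q.1 := by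
      ext k
      simp only [Finset.mem_inter, Finset.mem_union]
      constructor
      · rintro ⟨hk1 | hk1, hk2⟩
        · exact hk1
        · exact absurd hk2 (by simpa using hB hk1)
      · intro hk; exact ⟨Or.inl hk, hA hk⟩
    have h2 : (q.1 ∪ q.2) \ P = q.2 := by
      ext k
      simp only [Finset.mem_sdiff, Finset.mem_union]
      constructor
      · rintro ⟨hk1 | hk1, hk2⟩
        · exact absurd (hA hk1) hk2
        · exact hk1
      · intro hk; exact ⟨Or.inr hk, by simpa using hB hk⟩
    rw [h1, h2]

end S7

theorem statement7 (n d : ℕ) (hd : 2 ≤ d) (hdn : d ≤ n)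
    (w : ℕ) (hw1 : 1 ≤ w) (hw2 : w ≤ d - 1)
    (v : (gilbertGraph n d).neighborSet 0)
    (hv : hammingNorm (v : Fin n → ZMod 2) = w) :
    (((sphereGraph n d).neighborSet v).ncard : ℤ) =
      (∑ i ∈ Finset.Icc 1 (d - 1), ∑ j ∈ Finset.Icc (ceilPos w i (d - 1)) (min w i),
        (w.choose j : ℤ) * ((n - w).choose (i - j))) - 1 := by
  classical
  set d' := d - 1 with hd'
  set v0 : Fin n → ZMod 2 := (v : Fin n → ZMod 2) with hv0def
  have hvv : v0 + v0 = 0 := by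
    funext k
    rcases S7.zmod2 (v0 k) with h | h <;> simp [h] <;> decide
  have hnegv : -v0 = v0 := by
    rw [neg_eq_iff_add_eq_zero, hvv]
  -- the finset of neighbors
  set N : Finset (Fin n → ZMod 2) :=
    {u | ((0 : Fin n → ZMod 2) ≠ u ∧ hammingDist 0 u ≤ d - 1) ∧
         (v0 ≠ u ∧ hammingDist v0 u ≤ d - 1)} with hN
  -- step 1 : ncard = N.card
  have h1 : ((sphereGraph n d).neighborSet v).ncard = N.card := by
    rw [Set.ncard_eq_toFinset_card']
    apply Finset.card_bij (fun (u : ((gilbertGraph n d).neighborSet 0)) _ => (u : Fin n → ZMod 2))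
    · intro u hu
      rw [Set.mem_toFinset] at hu
      have hadj : (gilbertGraph n d).Adj v0 u := hu
      have hmem : (gilbertGraph n d).Adj 0 u := u.2
      simp only [hN, Finset.mem_filter, Finset.mem_univ, true_and]
      exact ⟨hmem, hadj⟩
    · intro a _ b _ hab
      exact Subtype.ext hab
    · intro u hu
      simp only [hN, Finset.mem_filter, Finset.mem_univ, true_and] at hu
      refine ⟨⟨u, hu.1⟩, ?_, rfl⟩
      rw [Set.mem_toFinset]
      exact hu.2
  -- step 2 : N.card = (M'.erase v0).card via shift by v0
  set M' : Finset (Fin n → ZMod 2) :=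
    {x | 1 ≤ hammingNorm x ∧ hammingNorm x ≤ d' ∧ hammingDist x v0 ≤ d'} with hM'
  have hshift : ∀ u : Fin n → ZMod 2, hammingDist (u + v0) v0 = hammingNorm u := by
    intro u
    rw [hammingDist_comm, hammingDist_eq_hammingNorm, hnegv, add_comm u v0, ← add_assoc, hvv, zero_add]
  have hshift2 : ∀ u : Fin n → ZMod 2, hammingNorm (u + v0) = hammingDist u v0 := by
    intro u
    rw [hammingDist_comm, hammingDist_eq_hammingNorm, hnegv, add_comm]
  have hadd : ∀ u x : Fin n → ZMod 2, u + v0 = x ↔ u = x + v0 := by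
    intro u x
    constructor <;> rintro rfl <;> rw [add_assoc, hvv, add_zero]
  have hNmem : ∀ u, u ∈ N ↔ (u ≠ 0 ∧ hammingNorm u ≤ d' ∧ u ≠ v0 ∧ hammingDist u v0 ≤ d') := by
    intro u
    simp only [hN, Finset.mem_filter, Finset.mem_univ, true_and, hammingDist_zero_left,
      hammingDist_comm v0, ne_comm (a := (0 : Fin n → ZMod 2)), ne_comm (a := v0)]
    tauto
  have hMmem : ∀ x, x ∈ M'.erase v0 ↔
      (x ≠ v0 ∧ x ≠ 0 ∧ hammingNorm x ≤ d' ∧ hammingDist x v0 ≤ d') := by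
    intro x
    simp only [Finset.mem_erase, hM', Finset.mem_filter, Finset.mem_univ, true_and,
      Nat.one_le_iff_ne_zero, Ne, hammingNorm_eq_zero]
  have h2 : N.card = (M'.erase v0).card := by
    apply Finset.card_bij' (fun u _ => u + v0) (fun x _ => x + v0)
    · intro u hu
      rw [hNmem] at hu
      obtain ⟨h01, h02, hv1, hv2'⟩ := hu
      rw [hMmem]
      refine ⟨?_, ?_, ?_, ?_⟩
      · rw [Ne, hadd, hvv]; exact h01
      · rw [Ne, hadd, zero_add]; exact hv1
      · rw [hshift2]; exact hv2'
      · rw [hshift]; exact h02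
    · intro x hx
      rw [hMmem] at hx
      obtain ⟨hx1, hx2, hx3, hx4⟩ := hx
      rw [hNmem]
      refine ⟨?_, ?_, ?_, ?_⟩
      · rw [Ne, hadd, zero_add]; exact hx1
      · rw [hshift2]; exact hx4
      · rw [Ne, hadd, hvv]; exact hx2
      · rw [hshift]; exact hx3
    · intro u _
      rw [add_assoc, hvv, add_zero]
    · intro x _
      rw [add_assoc, hvv, add_zero]
  have hv0mem : v0 ∈ M' := by
    simp only [hM', Finset.mem_filter, Finset.mem_univ, true_and]
    refine ⟨by rw [hv]; omega, by rw [hv]; exact hw2, by rw [hammingDist_self]; omega⟩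
  have h3 : (M'.erase v0).card = M'.card - 1 := Finset.card_erase_of_mem hv0mem
  have h3' : 1 ≤ M'.card := Finset.card_pos.mpr ⟨v0, hv0mem⟩
  set P := S7.toSet v0 with hPdef
  have hPcard : P.card = w := by rw [← hv]; rfl
  have hPc : Pᶜ.card = n - w := by
    rw [Finset.card_compl, hPcard, Fintype.card_fin]
  have h4 : M'.card = ∑ i ∈ Finset.Icc 1 d', (M'.filter (fun x => hammingNorm x = i)).card := by
    apply Finset.card_eq_sum_card_fiberwise
    intro x hx
    change x ∈ M' at hx
    simp only [hM', Finset.mem_filter, Finset.mem_univ, true_and] at hx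
    exact Finset.mem_Icc.mpr ⟨hx.1, hx.2.1⟩
  have h5 : ∀ i ∈ Finset.Icc 1 d', (M'.filter (fun x => hammingNorm x = i)).card
      = ∑ j ∈ Finset.Icc (ceilPos w i d') (min w i), w.choose j * ((n - w).choose (i - j)) := by
    intro i hi
    rw [Finset.mem_Icc] at hi
    have e1 : M'.filter (fun x => hammingNorm x = i)
        = ({x : Fin n → ZMod 2 | hammingNorm x = i ∧ hammingDist x v0 ≤ d'} : Finset _) := by
      ext x
      simp only [hM', Finset.mem_filter, Finset.mem_univ, true_and]
      constructor
      · rintro ⟨⟨_, _, h3⟩, h4⟩; exact ⟨h4, h3⟩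
      · rintro ⟨h4, h3⟩; exact ⟨⟨by omega, by omega, h3⟩, h4⟩
    rw [e1]
    have e2 : ({x : Fin n → ZMod 2 | hammingNorm x = i ∧ hammingDist x v0 ≤ d'} : Finset _).card
        = ({S : Finset (Fin n) | S.card = i ∧ (S \ P).card + (P \ S).card ≤ d'} : Finset _).card := by
      apply Finset.card_bij' (fun x _ => S7.toSet x) (fun S _ => S7.ofSet S)
      · intro x hx
        simp only [Finset.mem_filter, Finset.mem_univ, true_and] at hx ⊢
        rw [← S7.norm_eq]
        refine ⟨hx.1, ?_⟩
        rw [hPdef, ← S7.dist_eq]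
        exact hx.2
      · intro S hS
        simp only [Finset.mem_filter, Finset.mem_univ, true_and] at hS ⊢
        rw [S7.norm_eq, S7.toSet_ofSet, S7.dist_eq, S7.toSet_ofSet, ← hPdef]
        exact hS
      · intro x _; exact S7.ofSet_toSet x
      · intro S _; exact S7.toSet_ofSet S
    rw [e2]
    have key : ∀ S : Finset (Fin n), S.card = i →
        ((S ∩ P).card ≤ w ∧ (S ∩ P).card ≤ i ∧ (S \ P).card = i - (S ∩ P).card
          ∧ (P \ S).card = w - (S ∩ P).card) := by
      intro S hS
      have c1 := Finset.card_inter_add_card_sdiff S P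
      have c2 := Finset.card_inter_add_card_sdiff P S
      rw [Finset.inter_comm P S] at c2
      rw [hS] at c1
      rw [hPcard] at c2
      exact ⟨by omega, by omega, by omega, by omega⟩
    have e3 : ({S : Finset (Fin n) | S.card = i ∧ (S \ P).card + (P \ S).card ≤ d'} : Finset _).card
        = ∑ j ∈ Finset.Icc (ceilPos w i d') (min w i),
            (({S : Finset (Fin n) | S.card = i ∧ (S \ P).card + (P \ S).card ≤ d'} : Finset _).filter
              (fun S => (S ∩ P).card = j)).card := by
      apply Finset.card_eq_sum_card_fiberwise
      intro S hS
      change S ∈ ({S : Finset (Fin n) | S.card = i ∧ (S \ P).card + (P \ S).card ≤ d'} : Finset _) at hS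
      simp only [Finset.mem_filter, Finset.mem_univ, true_and] at hS
      obtain ⟨hSc, hSd⟩ := hS
      obtain ⟨k1, k2, k3, k4⟩ := key S hSc
      simp only [Finset.mem_coe, Finset.mem_Icc]
      refine ⟨?_, by omega⟩
      rw [← S7.ceil_iff w i d' _ k1 k2]
      omega
    rw [e3]
    apply Finset.sum_congr rfl
    intro j hj
    rw [Finset.mem_Icc] at hj
    have hjw : j ≤ w := by omega
    have hji : j ≤ i := by omega
    have e4 : ({S : Finset (Fin n) | S.card = i ∧ (S \ P).card + (P \ S).card ≤ d'} : Finset _).filter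
          (fun S => (S ∩ P).card = j)
        = ({S : Finset (Fin n) | S.card = i ∧ (S ∩ P).card = j} : Finset _) := by
      ext S
      simp only [Finset.mem_filter, Finset.mem_univ, true_and]
      constructor
      · rintro ⟨⟨h1, _⟩, h2⟩; exact ⟨h1, h2⟩
      · rintro ⟨h1, h2⟩
        obtain ⟨k1, k2, k3, k4⟩ := key S h1
        refine ⟨⟨h1, ?_⟩, h2⟩
        rw [k3, k4, h2, S7.ceil_iff w i d' j hjw hji]
        exact hj.1
    rw [e4, S7.count_ij P i j hji, hPcard, hPc]
  -- assemble
  rw [h1, h2, h3]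
  rw [h4] at h3' ⊢
  push_cast [Nat.cast_sub h3']
  congr 1
  push_cast
  apply Finset.sum_congr rfl
  intro i hi
  rw [h5 i hi]
  push_cast
  rfl
end

section
/- Let n and d be positive integers with 2 ≤ d ≤ n and write d' = d−1. The number of edges of the Hamming sphere graph G_S equals e(G_S) = (1/2) · ∑_{w=1}^{d'} C(n,w) · ( ∑_{i=1}^{d'} ∑_{j=⌈(w+i−d')/2⌉⁺}^{min{w,i}} C(w,j)·C(n−w,i−j) − 1 ). -/
open Finset

lemma ceilPos_le_iff {w i d' j : ℕ} : ceilPos w i d' ≤ j ↔ w + i ≤ d' + 2 * j := by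
  rw [ceilPos, Int.toNat_le]; omega

def hsupp {n : ℕ} (u : Fin n → ZMod 2) : Finset (Fin n) := univ.filter (fun x => u x ≠ 0)

lemma mem_hsupp {n : ℕ} {u : Fin n → ZMod 2} {x : Fin n} : x ∈ hsupp u ↔ u x ≠ 0 := by
  simp [hsupp]

lemma card_hsupp {n : ℕ} (u : Fin n → ZMod 2) : (hsupp u).card = hammingNorm u := rfl

def vecOf {n : ℕ} (s : Finset (Fin n)) : Fin n → ZMod 2 := fun x => if x ∈ s then 1 else 0

lemma hsupp_vecOf {n : ℕ} (s : Finset (Fin n)) : hsupp (vecOf s) = s := by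
  ext x
  rw [mem_hsupp, vecOf]
  split <;> simp_all

lemma vecOf_hsupp {n : ℕ} (u : Fin n → ZMod 2) : vecOf (hsupp u) = u := by
  funext x
  have h2 : ∀ a : ZMod 2, a = 0 ∨ a = 1 := by decide
  rcases h2 (u x) with h | h <;> simp [vecOf, mem_hsupp, h]

lemma hammingDist_card {n : ℕ} (u v : Fin n → ZMod 2) :
    hammingDist u v + 2 * (hsupp u ∩ hsupp v).card = hammingNorm u + hammingNorm v := by
  have key : ∀ a b : ZMod 2, (a ≠ b) ↔ ((a ≠ 0 ∧ ¬ b ≠ 0) ∨ (b ≠ 0 ∧ ¬ a ≠ 0)) := by decide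
  have h1 : (univ.filter fun x => u x ≠ v x) = ((hsupp u \ hsupp v) ∪ (hsupp v \ hsupp u)) := by
    ext x
    simp only [mem_filter, mem_univ, true_and, Finset.mem_union, Finset.mem_sdiff, mem_hsupp]
    exact key (u x) (v x)
  have hdisj : Disjoint (hsupp u \ hsupp v) (hsupp v \ hsupp u) := disjoint_sdiff_sdiff
  have hd : hammingDist u v = (hsupp u \ hsupp v).card + (hsupp v \ hsupp u).card := by
    show (univ.filter fun x => u x ≠ v x).card = _
    rw [h1, Finset.card_union_of_disjoint hdisj]
  have e1 := Finset.card_sdiff_add_card_inter (hsupp u) (hsupp v)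
  have e2 := Finset.card_sdiff_add_card_inter (hsupp v) (hsupp u)
  rw [Finset.inter_comm] at e2
  rw [← card_hsupp u, ← card_hsupp v]
  omega


lemma count_inter {n : ℕ} (T : Finset (Fin n)) (i j : ℕ) (hji : j ≤ i) :
    (univ.filter (fun u : Fin n → ZMod 2 => hammingNorm u = i ∧ (hsupp u ∩ T).card = j)).card
      = T.card.choose j * (n - T.card).choose (i - j) := by
  classical
  have hcompl : (Tᶜ : Finset (Fin n)).card = n - T.card := by
    rw [Finset.card_compl, Fintype.card_fin]
  rw [← hcompl, ← Finset.card_powersetCard j T, ← Finset.card_powersetCard (i - j) Tᶜ,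
    ← Finset.card_product]
  apply Finset.card_bij' (fun u _ => (hsupp u ∩ T, hsupp u \ T))
      (fun p _ => vecOf (p.1 ∪ p.2))
  · intro u hu
    simp only [mem_filter, mem_univ, true_and] at hu
    obtain ⟨hwt, hint⟩ := hu
    have hcard : (hsupp u).card = i := by rw [card_hsupp]; exact hwt
    simp only [Finset.mem_product, Finset.mem_powersetCard]
    refine ⟨⟨Finset.inter_subset_right, hint⟩, ?_, ?_⟩
    · intro x hx
      simp only [Finset.mem_sdiff] at hx
      simp [hx.2]
    · have := Finset.card_sdiff_add_card_inter (hsupp u) T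
      omega
  · intro p hp
    simp only [Finset.mem_product, Finset.mem_powersetCard] at hp
    obtain ⟨⟨hA, hAc⟩, hB, hBc⟩ := hp
    have hdisj : Disjoint p.1 p.2 := by
      rw [Finset.disjoint_left]
      intro x hx1 hx2
      have := hB hx2
      simp only [Finset.mem_compl] at this
      exact this (hA hx1)
    have hBT : Disjoint p.2 T := by
      rw [Finset.disjoint_left]
      intro x hx1 hx2
      have := hB hx1
      simp only [Finset.mem_compl] at this
      exact this hx2
    have hsup : hsupp (vecOf (p.1 ∪ p.2)) = p.1 ∪ p.2 := hsupp_vecOf _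
    have hinterT : (p.1 ∪ p.2) ∩ T = p.1 := by
      rw [Finset.union_inter_distrib_right, Finset.inter_eq_left.mpr hA,
        Finset.disjoint_iff_inter_eq_empty.mp hBT, Finset.union_empty]
    simp only [mem_filter, mem_univ, true_and]
    constructor
    · rw [← card_hsupp, hsup, Finset.card_union_of_disjoint hdisj, hAc, hBc]
      omega
    · rw [hsup, hinterT, hAc]
  · intro u hu
    show vecOf ((hsupp u ∩ T) ∪ (hsupp u \ T)) = u
    rw [Finset.union_comm, Finset.sdiff_union_inter, vecOf_hsupp]
  · intro p hp
    simp only [Finset.mem_product, Finset.mem_powersetCard] at hp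
    obtain ⟨⟨hA, hAc⟩, hB, hBc⟩ := hp
    have hBT : Disjoint p.2 T := by
      rw [Finset.disjoint_left]
      intro x hx1 hx2
      have := hB hx1
      simp only [Finset.mem_compl] at this
      exact this hx2
    have hsup : hsupp (vecOf (p.1 ∪ p.2)) = p.1 ∪ p.2 := hsupp_vecOf _
    have hinterT : (p.1 ∪ p.2) ∩ T = p.1 := by
      rw [Finset.union_inter_distrib_right, Finset.inter_eq_left.mpr hA,
        Finset.disjoint_iff_inter_eq_empty.mp hBT, Finset.union_empty]
    have hsdiffT : (p.1 ∪ p.2) \ T = p.2 := by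
      rw [Finset.union_sdiff_distrib, Finset.sdiff_eq_empty_iff_subset.mpr hA,
        Finset.sdiff_eq_self_of_disjoint hBT, Finset.empty_union]
    show (hsupp (vecOf (p.1 ∪ p.2)) ∩ T, hsupp (vecOf (p.1 ∪ p.2)) \ T) = p
    rw [hsup, hinterT, hsdiffT]

lemma count_ball {n : ℕ} (d' : ℕ) (v : Fin n → ZMod 2) (w : ℕ) (hw : hammingNorm v = w) (i : ℕ) :
    (univ.filter (fun u : Fin n → ZMod 2 => hammingNorm u = i ∧ hammingDist u v ≤ d')).card
      = ∑ j ∈ Icc (ceilPos w i d') (min w i), w.choose j * (n - w).choose (i - j) := by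
  classical
  have hTcard : (hsupp v).card = w := by rw [card_hsupp]; exact hw
  have hmaps : ∀ u ∈ (univ.filter
      (fun u : Fin n → ZMod 2 => hammingNorm u = i ∧ hammingDist u v ≤ d')),
      (hsupp u ∩ hsupp v).card ∈ Icc (ceilPos w i d') (min w i) := by
    intro u hu
    simp only [mem_filter, mem_univ, true_and] at hu
    obtain ⟨hwt, hdist⟩ := hu
    have h1 := hammingDist_card u v
    have h2 : (hsupp u ∩ hsupp v).card ≤ i := by
      rw [← hwt, ← card_hsupp]; exact Finset.card_le_card Finset.inter_subset_left
    have h3 : (hsupp u ∩ hsupp v).card ≤ w := by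
      rw [← hTcard]; exact Finset.card_le_card Finset.inter_subset_right
    rw [Finset.mem_Icc, ceilPos_le_iff]
    omega
  rw [Finset.card_eq_sum_card_fiberwise hmaps]
  apply Finset.sum_congr rfl
  intro j hj
  rw [Finset.mem_Icc] at hj
  rw [← hTcard, ← count_inter (hsupp v) i j (le_trans hj.2 (min_le_right w i))]
  congr 1
  ext u
  simp only [mem_filter, mem_univ, true_and]
  constructor
  · rintro ⟨⟨h1, _⟩, h3⟩; exact ⟨h1, h3⟩
  · rintro ⟨h1, h2⟩
    refine ⟨⟨h1, ?_⟩, h2⟩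
    have hd := hammingDist_card u v
    have := ceilPos_le_iff.mp hj.1
    omega

lemma count_weight (n w : ℕ) :
    (univ.filter (fun u : Fin n → ZMod 2 => hammingNorm u = w)).card = n.choose w := by
  have h := count_inter (∅ : Finset (Fin n)) w 0 (Nat.zero_le w)
  simpa using h

instance (n d : ℕ) : DecidableRel (gilbertGraph n d).Adj :=
  fun u v => inferInstanceAs (Decidable (u ≠ v ∧ hammingDist u v ≤ d - 1))

instance (n d : ℕ) : DecidableRel (sphereGraph n d).Adj :=
  fun u v => inferInstanceAs (Decidable ((gilbertGraph n d).Adj u.val v.val))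

example (n d : ℕ) : Fintype ((gilbertGraph n d).neighborSet 0) := inferInstance
example (n d : ℕ) : Fintype (sphereGraph n d).edgeSet := inferInstance

lemma sphere_adj {n d : ℕ} (x y : (gilbertGraph n d).neighborSet 0) :
    (sphereGraph n d).Adj x y ↔ (x.val ≠ y.val ∧ hammingDist x.val y.val ≤ d - 1) := Iff.rfl

lemma mem_nbhd {n d : ℕ} (v : Fin n → ZMod 2) :
    v ∈ (gilbertGraph n d).neighborSet 0 ↔ (v ≠ 0 ∧ hammingNorm v ≤ d - 1) := by
  show (gilbertGraph n d).Adj 0 v ↔ _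
  constructor
  · rintro ⟨h1, h2⟩
    rw [hammingDist_comm, hammingDist_zero_right] at h2
    exact ⟨Ne.symm h1, h2⟩
  · rintro ⟨h1, h2⟩
    exact ⟨Ne.symm h1, by rw [hammingDist_comm, hammingDist_zero_right]; exact h2⟩

lemma sphere_degree {n d : ℕ} (x : ((gilbertGraph n d).neighborSet 0)) :
    (sphereGraph n d).degree x =
      ((univ.filter (fun v : Fin n → ZMod 2 => v ≠ 0 ∧ hammingNorm v ≤ d - 1)).filter
        (fun u => u ≠ x.val ∧ hammingDist u x.val ≤ d - 1)).card := by
  classical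
  rw [← SimpleGraph.card_neighborFinset_eq_degree]
  apply Finset.card_bij' (fun y (_ : y ∈ (sphereGraph n d).neighborFinset x) => y.val)
    (fun u hu => (⟨u, by
      rw [Finset.mem_filter, Finset.mem_filter] at hu
      exact (mem_nbhd u).mpr hu.1.2⟩ : ((gilbertGraph n d).neighborSet 0)))
  case hi =>
    intro y hy
    rw [SimpleGraph.mem_neighborFinset, sphere_adj] at hy
    rw [Finset.mem_filter, Finset.mem_filter]
    exact ⟨⟨Finset.mem_univ _, (mem_nbhd _).mp y.2⟩, Ne.symm hy.1,
      by rw [hammingDist_comm]; exact hy.2⟩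
  case hj =>
    intro u hu
    rw [Finset.mem_filter, Finset.mem_filter] at hu
    rw [SimpleGraph.mem_neighborFinset, sphere_adj]
    exact ⟨Ne.symm hu.2.1, by rw [hammingDist_comm]; exact hu.2.2⟩
  case left_inv => intro y hy; rfl
  case right_inv => intro u hu; rfl

def sphereS (n d' w : ℕ) : ℕ :=
  ∑ i ∈ Icc 1 d', ∑ j ∈ Icc (ceilPos w i d') (min w i), w.choose j * (n - w).choose (i - j)

lemma vertex_count (n d' : ℕ) {v : Fin n → ZMod 2} (hv0 : v ≠ 0) (hvle : hammingNorm v ≤ d') :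
    ((univ.filter (fun x : Fin n → ZMod 2 => x ≠ 0 ∧ hammingNorm x ≤ d')).filter
      (fun u => u ≠ v ∧ hammingDist u v ≤ d')).card + 1 = sphereS n d' (hammingNorm v) := by
  classical
  set V : Finset (Fin n → ZMod 2) := univ.filter (fun x => x ≠ 0 ∧ hammingNorm x ≤ d') with hV
  have hvmem : v ∈ V := by rw [hV, Finset.mem_filter]; exact ⟨mem_univ _, hv0, hvle⟩
  have hins : insert v (V.filter (fun u => u ≠ v ∧ hammingDist u v ≤ d'))
      = V.filter (fun u => hammingDist u v ≤ d') := by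
    ext u
    simp only [Finset.mem_insert, Finset.mem_filter]
    constructor
    · rintro (rfl | ⟨h1, _, h3⟩)
      · exact ⟨hvmem, by simp [hammingDist_self]⟩
      · exact ⟨h1, h3⟩
    · rintro ⟨h1, h2⟩
      by_cases h : u = v
      · left; exact h
      · right; exact ⟨h1, h, h2⟩
  have hcard : (V.filter (fun u => u ≠ v ∧ hammingDist u v ≤ d')).card + 1
      = (V.filter (fun u => hammingDist u v ≤ d')).card := by
    rw [← hins, Finset.card_insert_of_notMem (by simp)]
  have hmaps : ∀ u ∈ V.filter (fun u => hammingDist u v ≤ d'), hammingNorm u ∈ Icc 1 d' := by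
    intro u hu
    simp only [hV, Finset.mem_filter, mem_univ, true_and] at hu
    rw [Finset.mem_Icc]
    refine ⟨?_, hu.1.2⟩
    rcases Nat.eq_zero_or_pos (hammingNorm u) with h | h
    · exact absurd (hammingNorm_eq_zero.mp h) hu.1.1
    · exact h
  rw [hcard, Finset.card_eq_sum_card_fiberwise hmaps, sphereS]
  apply Finset.sum_congr rfl
  intro i hi
  rw [Finset.mem_Icc] at hi
  rw [← count_ball d' v (hammingNorm v) rfl i]
  congr 1
  ext u
  simp only [hV, Finset.mem_filter, mem_univ, true_and]
  constructor
  · rintro ⟨⟨⟨_, _⟩, hdist⟩, hwt⟩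
    exact ⟨hwt, hdist⟩
  · rintro ⟨hwt, hdist⟩
    refine ⟨⟨⟨?_, by omega⟩, hdist⟩, hwt⟩
    intro h
    rw [h, hammingNorm_zero] at hwt
    omega

lemma fiber_count (n d' : ℕ) {w : ℕ} (hw : w ∈ Icc 1 d') :
    ((univ.filter (fun x : Fin n → ZMod 2 => x ≠ 0 ∧ hammingNorm x ≤ d')).filter
      (fun v => hammingNorm v = w)).card = n.choose w := by
  rw [Finset.mem_Icc] at hw
  rw [← count_weight n w]
  congr 1
  ext v
  simp only [Finset.mem_filter, mem_univ, true_and]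
  constructor
  · rintro ⟨⟨_, _⟩, hwt⟩; exact hwt
  · intro hwt
    refine ⟨⟨?_, by omega⟩, hwt⟩
    intro h
    rw [h, hammingNorm_zero] at hwt
    omega

theorem statement8 (n d : ℕ) (hd : 2 ≤ d) (hdn : d ≤ n) :
    ((sphereGraph n d).edgeSet.ncard : ℝ) =
      (1 / 2) * ∑ w ∈ Finset.Icc 1 (d - 1), (n.choose w : ℝ) *
        ((∑ i ∈ Finset.Icc 1 (d - 1),
          ∑ j ∈ Finset.Icc (ceilPos w i (d - 1)) (min w i),
            (w.choose j : ℝ) * ((n - w).choose (i - j))) - 1) := by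
  classical
  set V : Finset (Fin n → ZMod 2) := univ.filter (fun x => x ≠ 0 ∧ hammingNorm x ≤ d - 1) with hV
  have hmemV : ∀ v : Fin n → ZMod 2, v ∈ V ↔ v ∈ (gilbertGraph n d).neighborSet 0 := by
    intro v
    rw [mem_nbhd]
    simp [hV]
  have hdeg : ∑ x : ((gilbertGraph n d).neighborSet 0), (sphereGraph n d).degree x
      = ∑ v ∈ V, ((V.filter (fun u => u ≠ v ∧ hammingDist u v ≤ d - 1)).card) := by
    rw [Finset.sum_subtype V hmemV
      (fun v => ((V.filter (fun u => u ≠ v ∧ hammingDist u v ≤ d - 1)).card))]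
    exact Finset.sum_congr rfl (fun x _ => sphere_degree x)
  have hmapsV : ∀ v ∈ V, hammingNorm v ∈ Icc 1 (d - 1) := by
    intro v hv
    simp only [hV, Finset.mem_filter, mem_univ, true_and] at hv
    rw [Finset.mem_Icc]
    exact ⟨Nat.one_le_iff_ne_zero.mpr (fun h => hv.1 (hammingNorm_eq_zero.mp h)), hv.2⟩
  have hkey : (∑ v ∈ V, (V.filter (fun u => u ≠ v ∧ hammingDist u v ≤ d - 1)).card) + V.card
      = ∑ w ∈ Icc 1 (d - 1), n.choose w * sphereS n (d - 1) w := by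
    have h1 : ∑ v ∈ V, ((V.filter (fun u => u ≠ v ∧ hammingDist u v ≤ d - 1)).card + 1)
        = ∑ w ∈ Icc 1 (d - 1), n.choose w * sphereS n (d - 1) w := by
      rw [← Finset.sum_fiberwise_of_maps_to hmapsV]
      apply Finset.sum_congr rfl
      intro w hw
      calc ∑ v ∈ V.filter (fun v => hammingNorm v = w),
            ((V.filter (fun u => u ≠ v ∧ hammingDist u v ≤ d - 1)).card + 1)
          = ∑ v ∈ V.filter (fun v => hammingNorm v = w), sphereS n (d - 1) w := by
            apply Finset.sum_congr rfl
            intro v hv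
            rw [Finset.mem_filter] at hv
            have hv' := hv.1
            simp only [hV, Finset.mem_filter, mem_univ, true_and] at hv'
            rw [← hv.2]
            exact vertex_count n (d - 1) hv'.1 hv'.2
        _ = (V.filter (fun v => hammingNorm v = w)).card * sphereS n (d - 1) w := by
            rw [Finset.sum_const, smul_eq_mul]
        _ = n.choose w * sphereS n (d - 1) w := by rw [fiber_count n (d - 1) hw]
    rw [← h1, Finset.sum_add_distrib, Finset.sum_const, smul_eq_mul, mul_one]
  have hVcard : V.card = ∑ w ∈ Icc 1 (d - 1), n.choose w := by
    rw [Finset.card_eq_sum_card_fiberwise hmapsV]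
    exact Finset.sum_congr rfl (fun w hw => fiber_count n (d - 1) hw)
  have hnat : 2 * (sphereGraph n d).edgeFinset.card + V.card
      = ∑ w ∈ Icc 1 (d - 1), n.choose w * sphereS n (d - 1) w := by
    rw [← SimpleGraph.sum_degrees_eq_twice_card_edges, hdeg]
    exact hkey
  have hE : (sphereGraph n d).edgeSet.ncard = (sphereGraph n d).edgeFinset.card := by
    rw [Set.ncard_eq_toFinset_card']
    exact congrArg Finset.card (by ext e; simp)
  have hinner : ∀ w ∈ Icc 1 (d - 1),
      (∑ i ∈ Finset.Icc 1 (d - 1),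
        ∑ j ∈ Finset.Icc (ceilPos w i (d - 1)) (min w i),
          (w.choose j : ℝ) * ((n - w).choose (i - j))) = (sphereS n (d - 1) w : ℝ) := by
    intro w _
    rw [sphereS]
    push_cast
    rfl
  have hR : ∑ w ∈ Icc 1 (d - 1), (n.choose w : ℝ) *
        ((∑ i ∈ Finset.Icc 1 (d - 1),
          ∑ j ∈ Finset.Icc (ceilPos w i (d - 1)) (min w i),
            (w.choose j : ℝ) * ((n - w).choose (i - j))) - 1)
      = ∑ w ∈ Icc 1 (d - 1), (n.choose w : ℝ) * ((sphereS n (d - 1) w : ℝ) - 1) := by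
    exact Finset.sum_congr rfl (fun w hw => by rw [hinner w hw])
  rw [hE, hR]
  have h1 := congrArg (fun k : ℕ => (k : ℝ)) hnat
  have h2 := congrArg (fun k : ℕ => (k : ℝ)) hVcard
  push_cast at h1 h2
  have hexp : ∑ w ∈ Icc 1 (d - 1), (n.choose w : ℝ) * ((sphereS n (d - 1) w : ℝ) - 1)
      = (∑ w ∈ Icc 1 (d - 1), (n.choose w : ℝ) * (sphereS n (d - 1) w : ℝ))
        - ∑ w ∈ Icc 1 (d - 1), (n.choose w : ℝ) := by
    rw [← Finset.sum_sub_distrib]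
    exact Finset.sum_congr rfl (fun _ _ => by ring)
  rw [hexp, ← h1, ← h2]
  ring
end

section
/- Let n and d be positive integers with 2 ≤ d ≤ n. If u and v are vertices of the Hamming sphere graph G_S with wt(v) ≤ wt(u) (where wt denotes Hamming weight), then the degree of v in G_S is at least the degree of u in G_S. -/
open Finset
namespace S9
variable {n : ℕ}
abbrev V (n : ℕ) := Fin n → ZMod 2

lemma z_add_self : ∀ a : ZMod 2, a + a = 0 := by decide
lemma z_add_ne : ∀ a b : ZMod 2, (a + b ≠ 0 ↔ a ≠ b) := by decide
lemma z_ne_zero : ∀ a : ZMod 2, a ≠ 0 → a = 1 := by decide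
lemma pi_add_self (x : V n) : x + x = 0 := funext fun i => z_add_self _
lemma pi_cancel (x y : V n) : x + y + y = x := by rw [add_assoc, pi_add_self, add_zero]

def ep (n : ℕ) (p : Fin n) : V n := Pi.single p 1

lemma ep_self (p : Fin n) : ep n p p = 1 := Pi.single_eq_same p 1
lemma ep_ne {p i : Fin n} (h : i ≠ p) : ep n p i = 0 := Pi.single_eq_of_ne h 1

lemma dist_eq_norm_add (x y : V n) : hammingDist x y = hammingNorm (x + y) := by
  simp only [hammingDist, hammingNorm]
  congr 1
  ext i
  simp only [mem_filter, Pi.add_apply]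
  rw [z_add_ne]

lemma flip0 (x : V n) (p : Fin n) (h : x p = 0) :
    hammingNorm (x + ep n p) = hammingNorm x + 1 := by
  simp only [hammingNorm]
  have hs : (univ.filter fun i => (x + ep n p) i ≠ 0)
      = insert p (univ.filter fun i => x i ≠ 0) := by
    ext i
    by_cases hi : i = p
    · subst hi; simp [h, ep_self]
    · simp [ep_ne hi, hi]
  rw [hs, card_insert_of_notMem (by simp [h])]

lemma flip1 (x : V n) (p : Fin n) (h : x p ≠ 0) :
    hammingNorm (x + ep n p) + 1 = hammingNorm x := by
  have h1 : x p = 1 := z_ne_zero _ h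
  simp only [hammingNorm]
  have h11 : (1 : ZMod 2) + 1 = 0 := by decide
  have hs : (univ.filter fun i => (x + ep n p) i ≠ 0)
      = (univ.filter fun i => x i ≠ 0).erase p := by
    ext i
    by_cases hi : i = p
    · subst hi; simp [h1, ep_self, h11]
    · simp [ep_ne hi, hi]
  rw [hs, card_erase_add_one (by simp [h1])]


lemma z3 : ∀ a b c : ZMod 2, a + c + (b + c) = a + b := by decide
lemma z4 : ∀ a b : ZMod 2, b + (a + b) = a := by decide
lemma pi3 (w u c : V n) : w + c + (u + c) = w + u := funext fun i => z3 _ _ _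
lemma pi_cv (u c : V n) : c + (u + c) = u := funext fun i => z4 _ _

def S (n d' : ℕ) (u : V n) : Set (V n) :=
  {w | w ≠ 0 ∧ hammingNorm w ≤ d' ∧ w ≠ u ∧ hammingNorm (w + u) ≤ d'}

lemma key (d' : ℕ) (u v c : V n) (hc : v = u + c)
    (hun : hammingNorm u ≤ d') (hu0 : u ≠ 0)
    (H : ∀ w ∈ S n d' u, d' < hammingNorm (w + c) → hammingNorm (w + v) ≤ d') :
    (S n d' u).ncard ≤ (S n d' v).ncard := by
  classical
  have hcv : c + v = u := by rw [hc]; exact pi_cv u c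
  apply Set.ncard_le_ncard_of_injOn (fun w => if w + c ∈ S n d' v then w + c else w)
    ?_ ?_ (Set.toFinite _)
  · -- maps to
    intro w hw
    by_cases hm : w + c ∈ S n d' v
    · simpa [hm] using hm
    · simp only [hm, if_false]
      obtain ⟨hw0, hwn, hwu, hwun⟩ := hw
      have hwcv : w + c + v = w + u := by rw [hc]; exact pi3 w u c
      have hfail : w + c = 0 ∨ d' < hammingNorm (w + c) ∨ w + c = v := by
        by_contra hcon
        push_neg at hcon
        exact hm ⟨hcon.1, hcon.2.1, hcon.2.2, by rw [hwcv]; exact hwun⟩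
      have hwv : w ≠ v := by
        intro he
        rcases hfail with h1 | h2 | h3
        · have hwc : w = c := by
            have h := (pi_cancel w c).symm
            rw [h1, zero_add] at h
            exact h
          apply hu0
          rw [← hcv, ← hwc, he, pi_add_self]
        · have h : w + c = u := by rw [he, add_comm, hcv]
          rw [h] at h2; omega
        · apply hwu
          have : u = w := by
            calc u = c + v := hcv.symm
              _ = v + c := add_comm _ _
              _ = w + c := by rw [he]
              _ = v := h3
              _ = w := he.symm
          exact this.symm
      refine ⟨hw0, hwn, hwv, ?_⟩
      rcases hfail with h1 | h2 | h3
      · have hwc : w = c := by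
          have h := (pi_cancel w c).symm
          rw [h1, zero_add] at h
          exact h
        rw [hwc, hcv]; exact hun
      · exact H w ⟨hw0, hwn, hwu, hwun⟩ h2
      · exfalso
        apply hwu
        rw [← pi_cancel w c, h3, hc, pi_cancel]
  · -- injective
    intro w1 h1 w2 h2 heq
    by_cases m1 : w1 + c ∈ S n d' v <;> by_cases m2 : w2 + c ∈ S n d' v <;>
      simp only [m1, m2, if_true, if_false] at heq
    · rw [← pi_cancel w1 c, heq, pi_cancel]
    · -- w1 flipped, w2 kept : w1 + c = w2
      exfalso
      apply m2
      have hw2c : w2 + c = w1 := by rw [← heq, pi_cancel]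
      obtain ⟨h10, h1n, h1u, h1un⟩ := h1
      obtain ⟨h20, h2n, h2u, h2un⟩ := h2
      refine ⟨by rw [hw2c]; exact h10, by rw [hw2c]; exact h1n, ?_, ?_⟩
      · rw [hw2c]; intro he; apply h2u
        calc w2 = w1 + c := heq.symm
          _ = v + c := by rw [he]
          _ = c + v := add_comm _ _
          _ = u := hcv
      · rw [hw2c]
        have h : w1 + v = w2 + u := by rw [← hw2c, hc]; exact pi3 w2 u c
        rw [h]; exact h2un
    · -- w2 flipped, w1 kept : w1 = w2 + c
      exfalso
      apply m1
      have hw1c : w1 + c = w2 := by rw [heq, pi_cancel]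
      obtain ⟨h10, h1n, h1u, h1un⟩ := h1
      obtain ⟨h20, h2n, h2u, h2un⟩ := h2
      refine ⟨by rw [hw1c]; exact h20, by rw [hw1c]; exact h2n, ?_, ?_⟩
      · rw [hw1c]; intro he; apply h1u
        calc w1 = w2 + c := heq
          _ = v + c := by rw [he]
          _ = c + v := add_comm _ _
          _ = u := hcv
      · rw [hw1c]
        have h : w2 + v = w1 + u := by rw [← hw1c, hc]; exact pi3 w1 u c
        rw [h]; exact h1un
    · exact heq

lemma norm_eq (x : V n) : hammingNorm x = (univ.filter fun i => x i ≠ 0).card := rfl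

lemma flip_le (x : V n) (p : Fin n) : hammingNorm (x + ep n p) ≤ hammingNorm x + 1 := by
  by_cases h : x p = 0
  · rw [flip0 x p h]
  · have := flip1 x p h; omega

lemma stepB (d' : ℕ) (u : V n) (p : Fin n) (hp : u p ≠ 0)
    (hun : hammingNorm u ≤ d') (h2 : 2 ≤ hammingNorm u) :
    (S n d' u).ncard ≤ (S n d' (u + ep n p)).ncard := by
  apply key d' u _ (ep n p) rfl hun
  · intro h; rw [h, hammingNorm_zero] at h2; omega
  · intro w hw hgt
    obtain ⟨hw0, hwn, hwu, hwun⟩ := hw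
    have hwp : w p = 0 := by
      by_contra hne
      have := flip1 w p hne
      omega
    have hwup : (w + u) p ≠ 0 := by
      simp only [Pi.add_apply, hwp, zero_add]; exact hp
    have hre : w + (u + ep n p) = (w + u) + ep n p := by rw [add_assoc]
    rw [hre]
    have := flip1 (w + u) p hwup
    omega

lemma stepB' (d' : ℕ) (u : V n) (p q : Fin n) (hp : u p ≠ 0) (hq : u q = 0)
    (hu0 : u ≠ 0) (hun : hammingNorm u ≤ d') :
    (S n d' u).ncard ≤ (S n d' (u + (ep n p + ep n q))).ncard := by
  have hpq : p ≠ q := fun h => hp (h ▸ hq)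
  apply key d' u _ (ep n p + ep n q) rfl hun hu0
  intro w hw hgt
  obtain ⟨hw0, hwn, hwu, hwun⟩ := hw
  rw [← add_assoc] at hgt
  have hwp : w p = 0 := by
    by_contra hne
    have f1 := flip1 w p hne
    have f2 := flip_le (w + ep n p) q
    omega
  have hwq : w q = 0 := by
    by_contra hne
    have h1 : (w + ep n p) q ≠ 0 := by
      simp only [Pi.add_apply, ep_ne hpq.symm, add_zero]; exact hne
    have f2 := flip1 (w + ep n p) q h1
    have f1 := flip_le w p
    omega
  have hre : w + (u + (ep n p + ep n q)) = ((w + u) + ep n p) + ep n q := by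
    rw [← add_assoc, ← add_assoc]
  rw [hre]
  have h1 : (w + u) p ≠ 0 := by
    simp only [Pi.add_apply, hwp, zero_add]; exact hp
  have f1 := flip1 (w + u) p h1
  have h2 : ((w + u) + ep n p) q = 0 := by
    simp only [Pi.add_apply, hwq, hq, ep_ne hpq.symm, add_zero]
  have f2 := flip0 ((w + u) + ep n p) q h2
  omega

lemma z_iff : ∀ a b : ZMod 2, ((a ≠ 0) ↔ (b ≠ 0)) → a = b := by decide

lemma eq_of_nodiff (u v : V n) (hle : hammingNorm v ≤ hammingNorm u)
    (hno : ∀ p, u p ≠ 0 → v p ≠ 0) : u = v := by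
  have hsub : (univ.filter fun i => u i ≠ 0) ⊆ (univ.filter fun i => v i ≠ 0) := by
    intro i hi
    simp only [mem_filter, mem_univ, true_and] at *
    exact hno i hi
  have hcard : (univ.filter fun i => v i ≠ 0).card ≤ (univ.filter fun i => u i ≠ 0).card := by
    rw [← norm_eq, ← norm_eq]; exact hle
  have heq := Finset.eq_of_subset_of_card_le hsub hcard
  funext i
  apply z_iff
  constructor
  · intro h
    have : i ∈ (univ.filter fun i => v i ≠ 0) := heq ▸ (by simpa using h)
    simpa using this
  · intro h
    have : i ∈ (univ.filter fun i => u i ≠ 0) := heq.symm ▸ (by simpa using h)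
    simpa using this

lemma chain (d' : ℕ) : ∀ (N : ℕ) (u v : V n), u ≠ 0 → v ≠ 0 →
    hammingNorm u ≤ d' → hammingNorm v ≤ d' → hammingNorm v ≤ hammingNorm u →
    (hammingNorm u - hammingNorm v) + (univ.filter fun i => u i ≠ 0 ∧ v i = 0).card ≤ N →
    (S n d' u).ncard ≤ (S n d' v).ncard := by
  intro N
  induction N with
  | zero =>
    intro u v hu0 hv0 hun hvn hle hμ
    have hc0 : (univ.filter fun i => u i ≠ 0 ∧ v i = 0).card = 0 := by omega
    have hno : ∀ p, u p ≠ 0 → v p ≠ 0 := by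
      intro p hp hvp
      have : p ∈ (univ.filter fun i => u i ≠ 0 ∧ v i = 0) := by simp [hp, hvp]
      rw [card_eq_zero] at hc0
      rw [hc0] at this
      exact absurd this (notMem_empty p)
    rw [eq_of_nodiff u v hle hno]
  | succ N ih =>
    intro u v hu0 hv0 hun hvn hle hμ
    by_cases hex : ∃ p, u p ≠ 0 ∧ v p = 0
    · obtain ⟨p, hp, hvp⟩ := hex
      have hpmem : p ∈ (univ.filter fun i => u i ≠ 0 ∧ v i = 0) := by simp [hp, hvp]
      by_cases heq : hammingNorm v = hammingNorm u
      · -- equal weights: transposition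
        have hq : ∃ q, v q ≠ 0 ∧ u q = 0 := by
          by_contra hnq
          push_neg at hnq
          have : v = u := eq_of_nodiff v u (by omega) hnq
          rw [this] at hvp
          exact hp hvp
        obtain ⟨q, hvq, huq⟩ := hq
        have hpq : p ≠ q := fun h => hp (h ▸ huq)
        set u' := u + (ep n p + ep n q) with hu'
        have hnorm' : hammingNorm u' = hammingNorm u := by
          have hre : u' = (u + ep n p) + ep n q := by rw [hu', add_assoc]
          have f1 := flip1 u p hp
          have h2 : (u + ep n p) q = 0 := by
            simp only [Pi.add_apply, huq, ep_ne hpq.symm, add_zero]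
          have f2 := flip0 (u + ep n p) q h2
          rw [hre, f2]; omega
        have hu'0 : u' ≠ 0 := by
          intro h
          rw [h, hammingNorm_zero] at hnorm'
          exact hu0 (hammingNorm_eq_zero.mp hnorm'.symm)
        refine le_trans (stepB' d' u p q hp huq hu0 hun) (ih u' v hu'0 hv0 (by omega) hvn (by omega) ?_)
        have hup1 : u' p = 0 := by
          have h1 : u p = 1 := z_ne_zero _ hp
          simp only [hu', Pi.add_apply, ep_self, ep_ne hpq, h1]
          decide
        have hsub : (univ.filter fun i => u' i ≠ 0 ∧ v i = 0) ⊆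
            (univ.filter fun i => u i ≠ 0 ∧ v i = 0).erase p := by
          intro i hi
          simp only [mem_filter, mem_univ, true_and] at hi
          rcases eq_or_ne i p with rfl | hip
          · exact absurd hup1 hi.1
          · rcases eq_or_ne i q with rfl | hiq
            · exact absurd hi.2 hvq
            · have : u' i = u i := by
                simp only [hu', Pi.add_apply, ep_ne hip, ep_ne hiq, add_zero]
              rw [mem_erase]
              exact ⟨hip, by simp [← this, hi.1, hi.2]⟩
        have hcard := Finset.card_le_card hsub
        have hcerase := Finset.card_erase_of_mem hpmem
        omega
      · -- strictly smaller weight: deletion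
        have hvpos : 0 < hammingNorm v := hammingNorm_pos_iff.mpr hv0
        have h2 : 2 ≤ hammingNorm u := by omega
        have f1 := flip1 u p hp
        set u' := u + ep n p with hu'
        have hu'0 : u' ≠ 0 := by
          intro h
          rw [h, hammingNorm_zero] at f1
          omega
        refine le_trans (stepB d' u p hp hun h2) (ih u' v hu'0 hv0 (by omega) hvn (by omega) ?_)
        have hsub : (univ.filter fun i => u' i ≠ 0 ∧ v i = 0) ⊆
            (univ.filter fun i => u i ≠ 0 ∧ v i = 0) := by
          intro i hi
          simp only [mem_filter, mem_univ, true_and] at hi ⊢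
          by_cases hip : i = p
          · subst hip
            have hup1 : u' i = 0 := by
              have h1 : u i = 1 := z_ne_zero _ hp
              simp only [hu', Pi.add_apply, ep_self, h1]
              decide
            exact absurd hup1 hi.1
          · have : u' i = u i := by
              simp only [hu', Pi.add_apply, ep_ne hip, add_zero]
            rw [← this]
            exact hi
        have hcard := Finset.card_le_card hsub
        omega
    · push_neg at hex
      rw [eq_of_nodiff u v hle hex]

lemma chain' (d' : ℕ) (u v : V n) (hu0 : u ≠ 0) (hv0 : v ≠ 0)
    (hun : hammingNorm u ≤ d') (hvn : hammingNorm v ≤ d')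
    (hle : hammingNorm v ≤ hammingNorm u) :
    (S n d' u).ncard ≤ (S n d' v).ncard :=
  chain d' _ u v hu0 hv0 hun hvn hle le_rfl

end S9

lemma image_nbhd (n d : ℕ) (u : (gilbertGraph n d).neighborSet 0) :
    Subtype.val '' ((sphereGraph n d).neighborSet u) = S9.S n (d-1) ↑u := by
  ext w
  constructor
  · rintro ⟨x, hx, rfl⟩
    have hadj : (gilbertGraph n d).Adj ↑u ↑x := hx
    have hx0 : (gilbertGraph n d).Adj 0 ↑x := x.2
    refine ⟨hx0.1.symm, ?_, fun h => hadj.1 h.symm, ?_⟩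
    · have := hx0.2
      rwa [S9.dist_eq_norm_add, zero_add] at this
    · have := hadj.2
      rwa [S9.dist_eq_norm_add, add_comm] at this
  · rintro ⟨hw0, hwn, hwu, hwun⟩
    have hmem : w ∈ (gilbertGraph n d).neighborSet 0 := by
      refine ⟨Ne.symm hw0, ?_⟩
      rwa [S9.dist_eq_norm_add, zero_add]
    refine ⟨⟨w, hmem⟩, ?_, rfl⟩
    show (gilbertGraph n d).Adj ↑u w
    refine ⟨fun h => hwu h.symm, ?_⟩
    rwa [S9.dist_eq_norm_add, add_comm]

theorem statement9 (n d : ℕ) (hd : 2 ≤ d) (hdn : d ≤ n)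
    (u v : (gilbertGraph n d).neighborSet 0)
    (h : hammingNorm (v : Fin n → ZMod 2) ≤ hammingNorm (u : Fin n → ZMod 2)) :
    ((sphereGraph n d).neighborSet u).ncard ≤ ((sphereGraph n d).neighborSet v).ncard := by
  rw [← Set.ncard_image_of_injective ((sphereGraph n d).neighborSet u) Subtype.val_injective,
    ← Set.ncard_image_of_injective ((sphereGraph n d).neighborSet v) Subtype.val_injective]
  rw [image_nbhd n d u, image_nbhd n d v]
  have hu2 : (gilbertGraph n d).Adj 0 ↑u := u.2
  have hv2 : (gilbertGraph n d).Adj 0 ↑v := v.2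
  have hu0 : (u : Fin n → ZMod 2) ≠ 0 := hu2.1.symm
  have hv0 : (v : Fin n → ZMod 2) ≠ 0 := hv2.1.symm
  have hun : hammingNorm (u : Fin n → ZMod 2) ≤ d - 1 := by
    have := hu2.2; rwa [S9.dist_eq_norm_add, zero_add] at this
  have hvn : hammingNorm (v : Fin n → ZMod 2) ≤ d - 1 := by
    have := hv2.2; rwa [S9.dist_eq_norm_add, zero_add] at this
  have hfin := S9.chain' (d - 1) (↑u : Fin n → ZMod 2) ↑v hu0 hv0 hun hvn h
  exact hfin
end

section
/- Let n and d be integers with 2 ≤ d ≤ n, and set δ = (d−1)/n. Define f_GV(n,d) = 2ⁿ / V(n,d−1) and f_V(n,d) = 2^{n−1} / 2^{⌊log₂ V(n−1,d−2)⌋}. Then f_V(n,d) / f_GV(n,d) ≤ (δ + 1)/δ. -/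
open Finset

/-- Volume of a Hamming ball of radius `d` in `𝔽₂ⁿ`. -/
def V (n d : ℕ) : ℕ := ∑ i ∈ Finset.range (d + 1), n.choose i

/-- The Gilbert–Varshamov lower bound `f_GV(n,d) = 2ⁿ / V(n,d-1)`. -/
noncomputable def fGV (n d : ℕ) : ℝ := (2 : ℝ) ^ n / (V n (d - 1) : ℝ)

/-- The Varshamov lower bound `f_V(n,d) = 2^(n-1) / 2^⌊log₂ V(n-1,d-2)⌋`. -/
noncomputable def fV (n d : ℕ) : ℝ :=
  (2 : ℝ) ^ (n - 1) / (2 : ℝ) ^ (⌊Real.logb 2 (V (n - 1) (d - 2) : ℝ)⌋)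

lemma V_succ (m s : ℕ) : V m (s + 1) = V m s + m.choose (s + 1) := by
  simp [V, Finset.sum_range_succ]

lemma V_pos (m s : ℕ) : 1 ≤ V m s := by
  have : m.choose 0 ≤ ∑ i ∈ Finset.range (s + 1), m.choose i :=
    Finset.single_le_sum (f := fun i => m.choose i) (by intro i _; exact Nat.zero_le _)
      (Finset.mem_range.mpr (Nat.succ_pos s))
  simpa [V] using this

lemma V_pascal (m s : ℕ) : V (m + 1) (s + 1) = V m (s + 1) + V m s := by
  induction s with
  | zero => simp [V, Finset.sum_range_succ]; omega
  | succ s ih =>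
      have h1 : V (m + 1) (s + 1 + 1) = V (m + 1) (s + 1) + (m + 1).choose (s + 1 + 1) :=
        V_succ _ _
      have h2 : (m + 1).choose (s + 1 + 1) = m.choose (s + 1) + m.choose (s + 1 + 1) :=
        Nat.choose_succ_succ _ _
      have h3 : V m (s + 1 + 1) = V m (s + 1) + m.choose (s + 1 + 1) := V_succ _ _
      have h4 : V m (s + 1) = V m s + m.choose (s + 1) := V_succ _ _
      omega

lemma keyB (m s : ℕ) (hs : s < m) : (s + 1) * V m (s + 1) ≤ (m + 1) * V m s := by
  have h1 : V m (s + 1) = V m s + m.choose (s + 1) := V_succ _ _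
  have h2 : m.choose (s + 1) * (s + 1) = m.choose s * (m - s) := Nat.choose_succ_right_eq m s
  have h3 : m.choose s ≤ V m s := by
    have : m.choose s ≤ ∑ i ∈ Finset.range (s + 1), m.choose i :=
      Finset.single_le_sum (f := fun i => m.choose i) (by intro i _; exact Nat.zero_le _)
        (Finset.mem_range.mpr (Nat.lt_succ_self s))
    simpa [V] using this
  calc (s + 1) * V m (s + 1) = (s + 1) * V m s + m.choose (s + 1) * (s + 1) := by
        rw [h1]; ring
    _ = (s + 1) * V m s + m.choose s * (m - s) := by rw [h2]
    _ ≤ (s + 1) * V m s + V m s * (m - s) := by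
        exact Nat.add_le_add_left (Nat.mul_le_mul_right _ h3) _
    _ = (s + 1 + (m - s)) * V m s := by ring
    _ = (m + 1) * V m s := by congr 1; omega

lemma keyA (m s : ℕ) (hs : s < m) :
    (s + 1) * V (m + 1) (s + 1) ≤ (m + s + 2) * V m s := by
  rw [V_pascal]
  calc (s + 1) * (V m (s + 1) + V m s)
      = (s + 1) * V m (s + 1) + (s + 1) * V m s := by ring
    _ ≤ (m + 1) * V m s + (s + 1) * V m s := Nat.add_le_add_right (keyB m s hs) _
    _ = (m + s + 2) * V m s := by ring

theorem statement14 (n d : ℕ) (hd : 2 ≤ d) (hdn : d ≤ n) :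
    fV n d / fGV n d ≤ (((d : ℝ) - 1) / n + 1) / (((d : ℝ) - 1) / n) := by
  obtain ⟨m, rfl⟩ : ∃ m, n = m + 1 := ⟨n - 1, by omega⟩
  obtain ⟨s, rfl⟩ : ∃ s, d = s + 2 := ⟨d - 2, by omega⟩
  have hs : s < m := by omega
  set A : ℝ := (V (m + 1) (s + 1) : ℝ) with hA
  set B : ℝ := (V m s : ℝ) with hB
  have hB1 : (1 : ℝ) ≤ B := by rw [hB]; exact_mod_cast V_pos m s
  have hBpos : (0 : ℝ) < B := by linarith
  have hApos : (0 : ℝ) < A := by rw [hA]; exact_mod_cast V_pos (m + 1) (s + 1)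
  set L : ℤ := ⌊Real.logb 2 B⌋ with hL
  have hLge : Real.logb 2 B - 1 < (L : ℝ) := Int.sub_one_lt_floor _
  have h2L : B ≤ 2 * (2 : ℝ) ^ L := by
    have h1 : (2 : ℝ) ^ (Real.logb 2 B - 1) ≤ (2 : ℝ) ^ (L : ℝ) :=
      Real.rpow_le_rpow_of_exponent_le (by norm_num) (le_of_lt hLge)
    have h2 : (2 : ℝ) ^ (Real.logb 2 B - 1) = B / 2 := by
      rw [Real.rpow_sub (by norm_num), Real.rpow_logb (by norm_num) (by norm_num) hBpos,
        Real.rpow_one]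
    have h3 : (2 : ℝ) ^ (L : ℝ) = (2 : ℝ) ^ L := by
      rw [Real.rpow_intCast]
    rw [h2, h3] at h1
    linarith
  have h2Lpos : (0 : ℝ) < (2 : ℝ) ^ L := zpow_pos (by norm_num) L
  have heq : fV (m + 1) (s + 2) / fGV (m + 1) (s + 2) = A / (2 * (2 : ℝ) ^ L) := by
    rw [fV, fGV]
    simp only [Nat.add_sub_cancel, Nat.succ_sub_one]
    rw [← hA, ← hB, ← hL, pow_succ]
    have hAne : A ≠ 0 := ne_of_gt hApos
    have hLne : (2 : ℝ) ^ L ≠ 0 := ne_of_gt h2Lpos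
    field_simp
  rw [heq]
  have step1 : A / (2 * (2 : ℝ) ^ L) ≤ A / B :=
    div_le_div_of_nonneg_left (le_of_lt hApos) hBpos h2L
  have hnat : ((s : ℝ) + 1) * A ≤ ((m : ℝ) + s + 2) * B := by
    have := keyA m s hs
    have : (((s + 1) * V (m + 1) (s + 1) : ℕ) : ℝ) ≤ (((m + s + 2) * V m s : ℕ) : ℝ) := by
      exact_mod_cast this
    push_cast at this
    linarith
  have step2 : A / B ≤ ((m : ℝ) + s + 2) / ((s : ℝ) + 1) := by
    rw [div_le_div_iff₀ hBpos (by positivity)]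
    nlinarith
  have hrhs : ((((s : ℝ) + 2) - 1) / ((m : ℝ) + 1) + 1) / ((((s : ℝ) + 2) - 1) / ((m : ℝ) + 1))
      = ((m : ℝ) + s + 2) / ((s : ℝ) + 1) := by
    have h3 : (0 : ℝ) < ((s : ℝ) + 2 - 1) / ((m : ℝ) + 1) := by
      have : ((s : ℝ) + 2 - 1) = (s : ℝ) + 1 := by ring
      rw [this]; positivity
    rw [div_eq_div_iff (ne_of_gt h3) (by positivity)]
    field_simp
    ring
  push_cast
  rw [hrhs]
  linarith
end

section
/- Let n and d be integers with 3 ≤ d ≤ n−2, and set δ = (d−1)/n. Define f_GV(n,d) = 2ⁿ / V(n,d−1) and f_E(n,d) = 2^{n−2} / max{ 2^{⌊log₂ V(n−3,d−2)⌋}, 2^{⌊log₂ V(n−2,d−3)⌋} }. Then f_E(n,d) / f_GV(n,d) ≤ 4/δ. -/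
open Finset

/-- The Elia lower bound. -/
noncomputable def fE (n d : ℕ) : ℝ :=
  (2 : ℝ) ^ (n - 2) /
    max ((2 : ℝ) ^ (⌊Real.logb 2 (V (n - 3) (d - 2) : ℝ)⌋))
        ((2 : ℝ) ^ (⌊Real.logb 2 (V (n - 2) (d - 3) : ℝ)⌋))

lemma V_succ_s15 (n d : ℕ) : V n (d + 1) = V n d + n.choose (d + 1) :=
  Finset.sum_range_succ _ _

lemma one_le_V (n d : ℕ) : 1 ≤ V n d := by
  induction d with
  | zero => simp [V]
  | succ d ih => rw [V_succ_s15]; omega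

lemma V_mono (n : ℕ) {d e : ℕ} (h : d ≤ e) : V n d ≤ V n e := by
  induction e with
  | zero => simpa [Nat.le_zero.mp h]
  | succ e ih =>
    rcases Nat.lt_or_ge d (e+1) with h' | h'
    · have := ih (by omega); rw [V_succ_s15]; omega
    · have : d = e + 1 := by omega
      simp [this]

lemma V_pascal_s15 (n r : ℕ) : V (n+1) (r+1) = V n (r+1) + V n r := by
  induction r with
  | zero =>
    simp [V, Finset.sum_range_succ]
    omega
  | succ r ih =>
    have e1 : V (n+1) (r+1+1) = V (n+1) (r+1) + (n+1).choose (r+2) := V_succ_s15 _ _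
    have e2 : V n (r+1+1) = V n (r+1) + n.choose (r+2) := V_succ_s15 _ _
    have e3 : V n (r+1) = V n r + n.choose (r+1) := V_succ_s15 _ _
    have e4 : (n+1).choose (r+2) = n.choose (r+1) + n.choose (r+2) :=
      Nat.choose_succ_succ' _ _
    omega

lemma V_step (n s : ℕ) : V (n+1) s ≤ V n s + V n (s-1) := by
  cases s with
  | zero => simp [V]
  | succ r => rw [V_pascal_s15, Nat.add_sub_cancel]

lemma V_three (n r : ℕ) : V (n+3) (r+1) ≤ 8 * V n r + n.choose (r+1) := by
  have h1 : V (n+3) (r+1) ≤ V (n+2) (r+1) + V (n+2) r := V_step (n+2) (r+1)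
  have h2 : V (n+2) (r+1) ≤ V (n+1) (r+1) + V (n+1) r := V_step (n+1) (r+1)
  have h3 : V (n+2) r ≤ V (n+1) r + V (n+1) (r-1) := V_step (n+1) r
  have h4 : V (n+1) (r+1) ≤ V n (r+1) + V n r := V_step n (r+1)
  have h5 : V (n+1) r ≤ V n r + V n (r-1) := V_step n r
  have h6 : V (n+1) (r-1) ≤ V n (r-1) + V n (r-1-1) := V_step n (r-1)
  have h7 : V n (r-1) ≤ V n r := V_mono n (by omega)
  have h8 : V n (r-1-1) ≤ V n r := V_mono n (by omega)
  have h9 : V n (r+1) = V n r + n.choose (r+1) := V_succ_s15 n r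
  omega

lemma key (m r : ℕ) (h : r + 1 ≤ m) :
    (r + 1) * V (m+3) (r+1) ≤ 8 * (m+3) * V m r := by
  have h1 : V (m+3) (r+1) ≤ 8 * V m r + m.choose (r+1) := V_three m r
  have h2 : m.choose (r+1) * (r+1) = m.choose r * (m - r) :=
    Nat.choose_succ_right_eq m r
  have h3 : m.choose r ≤ V m r := by
    have := V_mono m (Nat.le_refl r)
    cases r with
    | zero => simpa [V] using one_le_V m 0
    | succ s => rw [V_succ_s15]; omega
  obtain ⟨u, hu⟩ : ∃ u, m = r + 1 + u := ⟨m - (r+1), by omega⟩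
  have hmr : m - r = u + 1 := by omega
  rw [hmr] at h2
  calc (r + 1) * V (m+3) (r+1) ≤ (r+1) * (8 * V m r + m.choose (r+1)) :=
        Nat.mul_le_mul_left _ h1
    _ = 8 * (r+1) * V m r + m.choose (r+1) * (r+1) := by ring
    _ = 8 * (r+1) * V m r + m.choose r * (u+1) := by rw [h2]
    _ ≤ 8 * (r+1) * V m r + V m r * (u+1) := by
        have := Nat.mul_le_mul_right (u+1) h3; omega
    _ ≤ 8 * (m+3) * V m r := by
        have h9 := one_le_V m r
        subst hu
        nlinarith [h9]

theorem statement15 (n d : ℕ) (hd : 3 ≤ d) (hdn : d ≤ n - 2) :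
    fE n d / fGV n d ≤ 4 / (((d : ℝ) - 1) / n) := by
  have hn5 : 5 ≤ n := by omega
  have hdn' : d + 2 ≤ n := by omega
  -- Key combinatorial bound, cast to ℝ
  have hkeyN : (d - 1) * V n (d-1) ≤ 8 * n * V (n-3) (d-2) := by
    have h := key (n-3) (d-2) (by omega)
    have e1 : d - 2 + 1 = d - 1 := by omega
    have e2 : n - 3 + 3 = n := by omega
    rw [e1, e2] at h
    exact h
  set A : ℝ := (V n (d-1) : ℝ) with hA
  set x : ℝ := (V (n-3) (d-2) : ℝ) with hxdef
  have hA1 : (1:ℝ) ≤ A := by rw [hA]; exact_mod_cast one_le_V n (d-1)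
  have hx1 : (1:ℝ) ≤ x := by rw [hxdef]; exact_mod_cast one_le_V (n-3) (d-2)
  have hxpos : (0:ℝ) < x := by linarith
  have hApos : (0:ℝ) < A := by linarith
  have hdR : (2:ℝ) ≤ (d:ℝ) - 1 := by
    have : (3:ℕ) ≤ d := hd
    have : (3:ℝ) ≤ (d:ℝ) := by exact_mod_cast this
    linarith
  have hnR : (0:ℝ) < (n:ℝ) := by positivity
  have hkey : ((d:ℝ) - 1) * A ≤ 8 * n * x := by
    have h' : (((d - 1) * V n (d-1) : ℕ) : ℝ) ≤ ((8 * n * V (n-3) (d-2) : ℕ) : ℝ) :=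
      Nat.cast_le.mpr hkeyN
    rw [Nat.cast_mul, Nat.cast_mul, Nat.cast_mul,
      Nat.cast_sub (show 1 ≤ d by omega), Nat.cast_one] at h'
    rw [hA, hxdef]
    push_cast at h' ⊢
    linarith [h']
  -- the max denominator
  set a : ℤ := ⌊Real.logb 2 x⌋ with ha
  set b : ℤ := ⌊Real.logb 2 ((V (n-2) (d-3) : ℕ) : ℝ)⌋ with hb
  set M : ℝ := max ((2:ℝ) ^ a) ((2:ℝ) ^ b) with hM
  have h2a : x / 2 ≤ (2:ℝ) ^ a := by
    have hlt : Real.logb 2 x - 1 < (a:ℝ) := Int.sub_one_lt_floor _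
    have : x / 2 = (2:ℝ) ^ (Real.logb 2 x - 1) := by
      rw [Real.rpow_sub (by norm_num), Real.rpow_logb (by norm_num) (by norm_num) hxpos,
        Real.rpow_one]
    rw [this, ← Real.rpow_intCast]
    exact Real.rpow_le_rpow_left_iff (by norm_num) |>.mpr hlt.le
  have hMx : x / 2 ≤ M := h2a.trans (le_max_left _ _)
  have hMpos : (0:ℝ) < M := lt_of_lt_of_le (by positivity) hMx
  -- unfold fE, fGV
  obtain ⟨k, hk⟩ : ∃ k, n = k + 2 := ⟨n - 2, by omega⟩
  have hfE : fE n d = (2:ℝ) ^ k / M := by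
    rw [fE, hM, ha, hb, hxdef]
    congr 1
    rw [hk]; norm_num
  have hfGV : fGV n d = (2:ℝ) ^ n / A := rfl
  have hfGVpos : 0 < fGV n d := by rw [hfGV]; positivity
  have hrhs : 4 / (((d : ℝ) - 1) / n) = 4 * n / ((d:ℝ) - 1) := div_div_eq_mul_div _ _ _
  have h2n : (2:ℝ) ^ n = 4 * 2 ^ k := by rw [hk, pow_add]; ring
  have hpk : (0:ℝ) < (2:ℝ) ^ k := by positivity
  have hEq : fE n d / fGV n d = A / (4 * M) := by
    rw [hfE, hfGV, h2n]
    field_simp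
  rw [hrhs, hEq, div_le_div_iff₀ (by positivity) (by linarith : (0:ℝ) < (d:ℝ) - 1)]
  nlinarith [hkey, hMx, mul_nonneg hnR.le (show (0:ℝ) ≤ 2 * M - x by linarith)]
end

section
/- Let n and d be integers with 2 ≤ d ≤ n, and set δ = (d−1)/n. Let 𝓘(n,d−2) denote the number of vectors x ∈ 𝔽₂ⁿ satisfying d(x,u) ≤ d−2 and d(x,v) ≤ d−2, where u and v are any two fixed vectors of 𝔽₂ⁿ at Hamming distance d (for concreteness, u = 0 and v a fixed vector of weight d). Define f_GV(n,d) = 2ⁿ / V(n,d−1) and f_F₂(n,d) = (2ⁿ / V(n,d−1)) · ( V(n,d−1) + 𝓘(n,d−2) ) / V(n,d−2). Then f_F₂(n,d) / f_GV(n,d) ≤ (δ + 1)/δ. -/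
open Finset

/-- `𝓘(n,r)` relative to a vector `v`: the number of vectors within Hamming distance `r`
of both `0` and `v`. -/
noncomputable def interVol (n r : ℕ) (v : Fin n → ZMod 2) : ℕ :=
  {x : Fin n → ZMod 2 | hammingDist x 0 ≤ r ∧ hammingDist x v ≤ r}.ncard

/-- Fabris's second lower bound, relative to a fixed vector `v` of weight `d`. -/
noncomputable def fF2 (n d : ℕ) (v : Fin n → ZMod 2) : ℝ :=
  ((2 : ℝ) ^ n / (V n (d - 1) : ℝ)) *
    (((V n (d - 1) : ℝ) + (interVol n (d - 2) v : ℝ)) / (V n (d - 2) : ℝ))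

lemma hammingNorm_eq_card (n : ℕ) (x : Fin n → ZMod 2) :
    hammingNorm x = (univ.filter fun j => x j ≠ 0).card := rfl

lemma card_normEq (n i : ℕ) :
    ((univ : Finset (Fin n → ZMod 2)).filter fun x => hammingNorm x = i).card
      = n.choose i := by
  have hzmod : ∀ a : ZMod 2, a ≠ 0 → a = 1 := by decide
  have h1 : (Finset.powersetCard i (univ : Finset (Fin n))).card = n.choose i := by
    rw [Finset.card_powersetCard, Finset.card_univ, Fintype.card_fin]
  rw [← h1]
  refine Finset.card_nbij' (fun x => univ.filter fun j => x j ≠ 0)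
    (fun s => fun j => if j ∈ s then 1 else 0) ?_ ?_ ?_ ?_
  · intro x hx
    simp only [Finset.mem_coe, Finset.mem_filter, Finset.mem_univ, true_and] at hx
    rw [Finset.mem_coe, Finset.mem_powersetCard]
    exact ⟨Finset.filter_subset _ _, by rw [← hammingNorm_eq_card]; exact hx⟩
  · intro s hs
    rw [Finset.mem_coe, Finset.mem_powersetCard] at hs
    simp only [Finset.mem_coe, Finset.mem_filter, Finset.mem_univ, true_and]
    rw [hammingNorm_eq_card, ← hs.2]
    congr 1
    ext j
    simp only [Finset.mem_filter, Finset.mem_univ, true_and]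
    constructor
    · intro h
      by_contra hj
      simp [hj] at h
    · intro h
      simp [h]
  · intro x _
    funext j
    by_cases h : x j = 0
    · simp [h, Finset.mem_filter]
    · simp [h, Finset.mem_filter, hzmod _ h]
  · intro s _
    ext j
    simp only [Finset.mem_filter, Finset.mem_univ, true_and]
    by_cases h : j ∈ s <;> simp [h]

lemma card_ball (n r : ℕ) :
    ((univ : Finset (Fin n → ZMod 2)).filter fun x => hammingNorm x ≤ r).card = V n r := by
  have hmem : ∀ x ∈ (univ : Finset (Fin n → ZMod 2)).filter fun x => hammingNorm x ≤ r,
      hammingNorm x ∈ range (r + 1) := by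
    intro x hx
    simp only [Finset.mem_filter] at hx
    exact Finset.mem_range.2 (Nat.lt_succ_of_le hx.2)
  rw [Finset.card_eq_sum_card_fiberwise hmem]
  unfold V
  refine Finset.sum_congr rfl fun i hi => ?_
  rw [← card_normEq n i]
  rw [Finset.filter_filter]
  congr 1
  apply Finset.filter_congr
  intro x _
  simp only [Finset.mem_range] at hi
  constructor
  · exact fun h => h.2
  · exact fun h => ⟨by omega, h⟩

lemma interVol_eq (n r : ℕ) (v : Fin n → ZMod 2) :
    interVol n r v
      = ((univ : Finset (Fin n → ZMod 2)).filter
          fun x => hammingNorm x ≤ r ∧ hammingDist x v ≤ r).card := by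
  unfold interVol
  rw [← Set.ncard_coe_finset]
  congr 1
  ext x
  simp [hammingDist_zero_right]

lemma choose_le_V (n d : ℕ) : n.choose d ≤ V n d :=
  Finset.single_le_sum (f := fun i => n.choose i) (fun _ _ => Nat.zero_le _)
    (Finset.mem_range.2 (Nat.lt_succ_self d))

lemma interVol_zero (n : ℕ) (v : Fin n → ZMod 2) (hv : v ≠ 0) : interVol n 0 v = 0 := by
  unfold interVol
  convert Set.ncard_empty (Fin n → ZMod 2)
  ext x
  simp only [Set.mem_setOf_eq, Nat.le_zero, Set.mem_empty_iff_false, iff_false, not_and]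
  intro h1
  rw [hammingDist_zero_right, hammingNorm_eq_zero] at h1
  subst h1
  rw [hammingDist_zero_left]
  simpa [hammingNorm_eq_zero] using hv

lemma interVol_le (n d : ℕ) (v : Fin n → ZMod 2) (hd : 3 ≤ d) (hv : hammingNorm v = d) :
    interVol n (d - 2) v + (n + 1) ≤ V n (d - 2) := by
  rw [interVol_eq, ← card_ball n (d - 2)]
  have hB1 : ((univ : Finset (Fin n → ZMod 2)).filter fun x => hammingNorm x ≤ 1).card
      = n + 1 := by
    have h := card_ball n 1
    simp [V, Finset.sum_range_succ] at h
    omega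
  rw [← hB1]
  rw [← Finset.card_union_of_disjoint]
  · apply Finset.card_le_card
    intro x hx
    simp only [Finset.mem_union, Finset.mem_filter, Finset.mem_univ, true_and] at hx ⊢
    rcases hx with ⟨h1, _⟩ | h1
    · exact h1
    · omega
  · rw [Finset.disjoint_left]
    intro x hx hx'
    simp only [Finset.mem_filter, Finset.mem_univ, true_and] at hx hx'
    have htri : hammingDist v 0 ≤ hammingDist v x + hammingDist x 0 := hammingDist_triangle v x 0
    rw [hammingDist_zero_right, hammingDist_comm v x, hammingDist_zero_right] at htri
    rw [hv] at htri
    omega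

lemma main_ineq (n m : ℕ) (hm : 1 ≤ m) (h : m + 2 ≤ n) :
    n.choose m ≤ (n - m - 1) * V n (m - 1) + (m + 1) * (n + 1) := by
  rcases Nat.lt_or_ge m 2 with hm2 | hm2
  · -- m = 1
    have : m = 1 := by omega
    subst this
    simp [Nat.choose_one_right]
    nlinarith [Nat.zero_le ((n - 2) * V n 0)]
  · rcases Nat.lt_or_ge n (m + 3) with hn | hn
    · -- n = m + 2
      have hnm : m = n - 2 := by omega
      have h2n : 2 ≤ n := by omega
      have hsym : n.choose (n - 2) = n.choose 2 := Nat.choose_symm h2n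
      have h2 : n.choose 2 = n * (n - 1) / 2 := Nat.choose_two_right n
      have hle : n * (n - 1) / 2 ≤ n * (n - 1) := Nat.div_le_self _ _
      have hle2 : n * (n - 1) ≤ (m + 1) * (n + 1) := by
        have : m + 1 = n - 1 := by omega
        rw [this]
        calc n * (n - 1) = (n - 1) * n := Nat.mul_comm _ _
          _ ≤ (n - 1) * (n + 1) := Nat.mul_le_mul_left _ (by omega)
      calc n.choose m = n.choose 2 := by rw [hnm, hsym]
        _ = n * (n - 1) / 2 := h2
        _ ≤ n * (n - 1) := hle
        _ ≤ (m + 1) * (n + 1) := hle2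
        _ ≤ (n - m - 1) * V n (m - 1) + (m + 1) * (n + 1) := Nat.le_add_left _ _
    · -- n ≥ m + 3
      have key : n.choose m ≤ (n - m - 1) * n.choose (m - 1) := by
        have hid : n.choose m * m = n.choose (m - 1) * (n - (m - 1)) := by
          have h' := Nat.choose_succ_right_eq n (m - 1)
          have hm1 : m - 1 + 1 = m := by omega
          rwa [hm1] at h'
        refine Nat.le_of_mul_le_mul_left ?_ (show 0 < m by omega)
        calc m * n.choose m = n.choose (m - 1) * (n - m + 1) := by
              rw [Nat.mul_comm, hid]; congr 1; omega
          _ ≤ n.choose (m - 1) * (m * (n - m - 1)) := by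
              apply Nat.mul_le_mul_left
              calc n - m + 1 ≤ 2 * (n - m - 1) := by omega
                _ ≤ m * (n - m - 1) := Nat.mul_le_mul_right _ hm2
          _ = m * ((n - m - 1) * n.choose (m - 1)) := by ring
      calc n.choose m ≤ (n - m - 1) * n.choose (m - 1) := key
        _ ≤ (n - m - 1) * V n (m - 1) := Nat.mul_le_mul_left _ (choose_le_V n (m - 1))
        _ ≤ (n - m - 1) * V n (m - 1) + (m + 1) * (n + 1) := Nat.le_add_right _ _

lemma key_ineq (n m I : ℕ) (h : m + 2 ≤ n)
    (hI0 : m = 0 → I = 0) (hI1 : 1 ≤ m → I + (n + 1) ≤ V n m) :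
    (m + 1) * (V n (m + 1) + I) ≤ (n + m + 1) * V n m := by
  rcases Nat.eq_zero_or_pos m with hm | hm
  · subst hm
    rw [hI0 rfl]
    have h1 : V n 1 = 1 + n := by simp [V, Finset.sum_range_succ]
    have h0 : V n 0 = 1 := by simp [V]
    rw [h1, h0]
    omega
  · have hI := hI1 hm
    have hV1 : V n (m + 1) = V n m + n.choose (m + 1) := by
      simp [V, Finset.sum_range_succ]
    have hV2 : V n m = V n (m - 1) + n.choose m := by
      obtain ⟨k, rfl⟩ : ∃ k, m = k + 1 := ⟨m - 1, (Nat.succ_pred_eq_of_pos hm).symm⟩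
      simp [V, Finset.sum_range_succ]
    have hc1 : (m + 1) * n.choose (m + 1) = (n - m) * n.choose m := by
      rw [Nat.mul_comm, Nat.choose_succ_right_eq, Nat.mul_comm]
    have main := main_ineq n m hm h
    -- abbreviations
    set a := V n (m - 1) with ha
    set c := n.choose m with hc
    set c1 := n.choose (m + 1) with hc1'
    -- (n-m) c = c + (n-m-1) c ≤ (n-m-1)(a+c) + (m+1)(n+1)
    have step : (n - m) * c ≤ (n - m - 1) * (a + c) + (m + 1) * (n + 1) := by
      obtain ⟨k, hk⟩ : ∃ k, n - m = k + 1 := ⟨n - m - 1, by omega⟩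
      have hk' : n - m - 1 = k := by omega
      have hsplit : (n - m) * c = c + (n - m - 1) * c := by
        rw [hk', hk]; ring
      rw [hsplit]
      calc c + (n - m - 1) * c ≤ ((n - m - 1) * a + (m + 1) * (n + 1)) + (n - m - 1) * c :=
            Nat.add_le_add_right main _
        _ = (n - m - 1) * (a + c) + (m + 1) * (n + 1) := by ring
    rw [hV1, hV2]
    rw [hV2] at hI
    -- goal: (m+1) * ((a + c) + c1 + I) ≤ (n+m+1) * (a+c)
    have hmul : (m + 1) * c1 = (n - m) * c := hc1
    have expand : (m + 1) * (a + c + c1 + I)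
        = (m + 1) * (a + c) + (m + 1) * c1 + (m + 1) * I := by ring
    rw [expand, hmul]
    have hIm : (m + 1) * I + (m + 1) * (n + 1) ≤ (m + 1) * (a + c) := by
      calc (m + 1) * I + (m + 1) * (n + 1) = (m + 1) * (I + (n + 1)) := by ring
        _ ≤ (m + 1) * (a + c) := Nat.mul_le_mul_left _ hI
    have heq : (n - m - 1) * (a + c) + 2 * ((m + 1) * (a + c)) = (n + m + 1) * (a + c) := by
      have hco : n - m - 1 + 2 * (m + 1) = n + m + 1 := by omega
      calc (n - m - 1) * (a + c) + 2 * ((m + 1) * (a + c))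
          = (n - m - 1 + 2 * (m + 1)) * (a + c) := by ring
        _ = (n + m + 1) * (a + c) := by rw [hco]
    linarith [step, hIm, heq]

theorem statement16 (n d : ℕ) (hd : 2 ≤ d) (hdn : d ≤ n)
    (v : Fin n → ZMod 2) (hv : hammingNorm v = d) :
    fF2 n d v / fGV n d ≤ (((d : ℝ) - 1) / n + 1) / (((d : ℝ) - 1) / n) := by
  have hn : 0 < n := by omega
  have hV1pos : (0 : ℝ) < (V n (d - 1) : ℝ) := by exact_mod_cast one_le_V n (d - 1)
  have hV2pos : (0 : ℝ) < (V n (d - 2) : ℝ) := by exact_mod_cast one_le_V n (d - 2)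
  have hA : (2 : ℝ) ^ n / (V n (d - 1) : ℝ) ≠ 0 :=
    div_ne_zero (by positivity) (ne_of_gt hV1pos)
  have hlhs : fF2 n d v / fGV n d
      = ((V n (d - 1) : ℝ) + (interVol n (d - 2) v : ℝ)) / (V n (d - 2) : ℝ) := by
    rw [fF2, fGV, mul_comm, mul_div_assoc, div_self hA, mul_one]
  have hd1pos : (0 : ℝ) < (d : ℝ) - 1 := by
    have : (2 : ℝ) ≤ (d : ℝ) := by exact_mod_cast hd
    linarith
  have hnR : (0 : ℝ) < (n : ℝ) := by exact_mod_cast hn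
  have hrhs : (((d : ℝ) - 1) / n + 1) / (((d : ℝ) - 1) / n)
      = ((d : ℝ) - 1 + n) / ((d : ℝ) - 1) := by
    field_simp
  rw [hlhs, hrhs]
  rw [div_le_div_iff₀ hV2pos hd1pos]
  -- reduce to the ℕ inequality
  set m := d - 2 with hm
  have hd1 : d - 1 = m + 1 := by omega
  have hdm : d = m + 2 := by omega
  have hmn : m + 2 ≤ n := by omega
  have hI0 : m = 0 → interVol n m v = 0 := by
    intro h0
    have hvne : v ≠ 0 := by
      intro hv0
      rw [hv0, hammingNorm_zero] at hv
      omega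
    rw [h0]
    exact interVol_zero n v hvne
  have hI1 : 1 ≤ m → interVol n m v + (n + 1) ≤ V n m := by
    intro h1
    have := interVol_le n d v (by omega) hv
    rwa [← hm] at this
  have key := key_ineq n m (interVol n m v) hmn hI0 hI1
  have keyR : ((m : ℝ) + 1) * ((V n (m + 1) : ℝ) + (interVol n m v : ℝ))
      ≤ ((n : ℝ) + m + 1) * (V n m : ℝ) := by exact_mod_cast key
  rw [hd1]
  have hdR : (d : ℝ) = (m : ℝ) + 2 := by rw [hdm]; push_cast; ring
  rw [hdR]
  nlinarith [keyR]
end
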